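/- arXiv:0801.2058 — 16 statements merged into one kernel-verified Lean document; each statement's English description precedes it below -/
import Mathlib

section
/- The extended Schrödinger-Virasoro Lie algebra sv~ is perfect, i.e., [sv~, sv~] = sv~. -/
/-- Index type for the basis of the extended Schrödinger-Virasoro Lie algebra.
`Y n` stands for the generator `Y_{n+1/2}`. -/
inductive SVIdx : Type
  | L : ℤ → SVIdx
  | M : ℤ → SVIdx
  | N : ℤ → SVIdx
  | Y : ℤ → SVIdx

/-- A complex Lie algebra `g` is (a copy of) the extended Schrödinger-Virasoro
Lie algebra if it has a basis indexed by `SVIdx` whose brackets are given by the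
structure constants of `sv~`. -/
structure ExtSV (g : Type*) [LieRing g] [LieAlgebra ℂ g] where
  b : Module.Basis SVIdx ℂ g
  LL : ∀ m n : ℤ, ⁅b (SVIdx.L m), b (SVIdx.L n)⁆ = ((n : ℂ) - (m : ℂ)) • b (SVIdx.L (m + n))
  MM : ∀ m n : ℤ, ⁅b (SVIdx.M m), b (SVIdx.M n)⁆ = 0
  NN : ∀ m n : ℤ, ⁅b (SVIdx.N m), b (SVIdx.N n)⁆ = 0
  YY : ∀ m n : ℤ, ⁅b (SVIdx.Y m), b (SVIdx.Y n)⁆ = ((m : ℂ) - (n : ℂ)) • b (SVIdx.M (m + n + 1))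
  LM : ∀ m n : ℤ, ⁅b (SVIdx.L m), b (SVIdx.M n)⁆ = (n : ℂ) • b (SVIdx.M (m + n))
  LN : ∀ m n : ℤ, ⁅b (SVIdx.L m), b (SVIdx.N n)⁆ = (n : ℂ) • b (SVIdx.N (m + n))
  LY : ∀ m n : ℤ, ⁅b (SVIdx.L m), b (SVIdx.Y n)⁆ =
      ((n : ℂ) + (1 - (m : ℂ)) / 2) • b (SVIdx.Y (m + n))
  NM : ∀ m n : ℤ, ⁅b (SVIdx.N m), b (SVIdx.M n)⁆ = (2 : ℂ) • b (SVIdx.M (m + n))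
  NY : ∀ m n : ℤ, ⁅b (SVIdx.N m), b (SVIdx.Y n)⁆ = b (SVIdx.Y (m + n))
  MY : ∀ m n : ℤ, ⁅b (SVIdx.M m), b (SVIdx.Y n)⁆ = 0

/-- The extended Schrödinger-Virasoro Lie algebra is perfect: `[sv~, sv~] = sv~`. -/
theorem extSV_perfect {g : Type*} [LieRing g] [LieAlgebra ℂ g] (h : ExtSV g) :
    ⁅(⊤ : LieIdeal ℂ g), (⊤ : LieIdeal ℂ g)⁆ = ⊤ := by
  rw [eq_top_iff]
  intro x _
  have hx : x ∈ Submodule.span ℂ (Set.range h.b) := by rw [Module.Basis.span_eq]; trivial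
  have hb : ∀ i, h.b i ∈ ⁅(⊤ : LieIdeal ℂ g), (⊤ : LieIdeal ℂ g)⁆ := by
    intro i
    cases i with
    | L n =>
      have m1 : ⁅h.b (SVIdx.L (n+1)), h.b (SVIdx.L (-1))⁆ ∈
          ⁅(⊤ : LieIdeal ℂ g), (⊤ : LieIdeal ℂ g)⁆ :=
        LieSubmodule.lie_mem_lie (LieSubmodule.mem_top _) (LieSubmodule.mem_top _)
      have m2 : ⁅h.b (SVIdx.L (n-1)), h.b (SVIdx.L 1)⁆ ∈
          ⁅(⊤ : LieIdeal ℂ g), (⊤ : LieIdeal ℂ g)⁆ :=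
        LieSubmodule.lie_mem_lie (LieSubmodule.mem_top _) (LieSubmodule.mem_top _)
      have e1 := h.LL (n+1) (-1)
      have e2 := h.LL (n-1) 1
      have i1 : n + 1 + (-1) = n := by ring
      have i2 : n - 1 + 1 = n := by ring
      rw [i1] at e1
      rw [i2] at e2
      have key : h.b (SVIdx.L n) = (-(1:ℂ)/4) •
          (⁅h.b (SVIdx.L (n+1)), h.b (SVIdx.L (-1))⁆ - ⁅h.b (SVIdx.L (n-1)), h.b (SVIdx.L 1)⁆) := by
        rw [e1, e2, ← sub_smul, smul_smul]
        push_cast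
        have hc : (-1 / 4 : ℂ) * (-1 - (n + 1) - (1 - (n - 1))) = 1 := by ring
        rw [hc, one_smul]
      rw [key]
      exact Submodule.smul_mem _ _ (sub_mem m1 m2)
    | M n =>
      have m1 : ⁅h.b (SVIdx.N 0), h.b (SVIdx.M n)⁆ ∈
          ⁅(⊤ : LieIdeal ℂ g), (⊤ : LieIdeal ℂ g)⁆ :=
        LieSubmodule.lie_mem_lie (LieSubmodule.mem_top _) (LieSubmodule.mem_top _)
      have e1 := h.NM 0 n
      rw [zero_add] at e1
      have key : h.b (SVIdx.M n) = ((1:ℂ)/2) • ⁅h.b (SVIdx.N 0), h.b (SVIdx.M n)⁆ := by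
        rw [e1, smul_smul]; norm_num
      rw [key]
      exact Submodule.smul_mem _ _ m1
    | N n =>
      have m1 : ⁅h.b (SVIdx.L (n-1)), h.b (SVIdx.N 1)⁆ ∈
          ⁅(⊤ : LieIdeal ℂ g), (⊤ : LieIdeal ℂ g)⁆ :=
        LieSubmodule.lie_mem_lie (LieSubmodule.mem_top _) (LieSubmodule.mem_top _)
      have e1 := h.LN (n-1) 1
      have i1 : n - 1 + 1 = n := by ring
      rw [i1] at e1
      have key : h.b (SVIdx.N n) = ⁅h.b (SVIdx.L (n-1)), h.b (SVIdx.N 1)⁆ := by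
        rw [e1]; norm_num
      rw [key]; exact m1
    | Y n =>
      have m1 : ⁅h.b (SVIdx.N 0), h.b (SVIdx.Y n)⁆ ∈
          ⁅(⊤ : LieIdeal ℂ g), (⊤ : LieIdeal ℂ g)⁆ :=
        LieSubmodule.lie_mem_lie (LieSubmodule.mem_top _) (LieSubmodule.mem_top _)
      have e1 := h.NY 0 n
      rw [zero_add] at e1
      rw [← e1]; exact m1
  refine Submodule.span_induction (fun y hy => ?_) (zero_mem _)
    (fun a b _ _ ha hb => add_mem ha hb) (fun c a _ ha => Submodule.smul_mem _ _ ha) hx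
  obtain ⟨i, rfl⟩ := hy
  exact hb i
end

section
/- The extended Schrödinger-Virasoro Lie algebra sv~ is generated as a Lie algebra by the six elements L_{−2}, L_{−1}, L_1, L_2, N_1, Y_{1/2}. -/
/-- `sv~` is generated as a Lie algebra by `L_{-2}, L_{-1}, L_1, L_2, N_1, Y_{1/2}`. -/
theorem extSV_generated {g : Type*} [LieRing g] [LieAlgebra ℂ g] (h : ExtSV g) :
    LieSubalgebra.lieSpan ℂ g
      {h.b (SVIdx.L (-2)), h.b (SVIdx.L (-1)), h.b (SVIdx.L 1), h.b (SVIdx.L 2),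
        h.b (SVIdx.N 1), h.b (SVIdx.Y 0)} = ⊤ := by
  set S := LieSubalgebra.lieSpan ℂ g
      {h.b (SVIdx.L (-2)), h.b (SVIdx.L (-1)), h.b (SVIdx.L 1), h.b (SVIdx.L 2),
        h.b (SVIdx.N 1), h.b (SVIdx.Y 0)} with hSdef
  have hgen : ∀ x ∈ ({h.b (SVIdx.L (-2)), h.b (SVIdx.L (-1)), h.b (SVIdx.L 1), h.b (SVIdx.L 2),
        h.b (SVIdx.N 1), h.b (SVIdx.Y 0)} : Set g), x ∈ S :=
    fun x hx => LieSubalgebra.subset_lieSpan hx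
  have hLm2 : h.b (SVIdx.L (-2)) ∈ S := hgen _ (by simp)
  have hLm1 : h.b (SVIdx.L (-1)) ∈ S := hgen _ (by simp)
  have hL1 : h.b (SVIdx.L 1) ∈ S := hgen _ (by simp)
  have hL2 : h.b (SVIdx.L 2) ∈ S := hgen _ (by simp)
  have hN1 : h.b (SVIdx.N 1) ∈ S := hgen _ (by simp)
  have hY0 : h.b (SVIdx.Y 0) ∈ S := hgen _ (by simp)
  have key : ∀ (c : ℂ), c ≠ 0 → ∀ (v x y : g), x ∈ S → y ∈ S → ⁅x, y⁆ = c • v → v ∈ S := by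
    intro c hc v x y hx hy hb
    have hv : v = c⁻¹ • ⁅x, y⁆ := by rw [hb, smul_smul, inv_mul_cancel₀ hc, one_smul]
    rw [hv]
    exact S.smul_mem _ (S.lie_mem hx hy)
  have hL0 : h.b (SVIdx.L 0) ∈ S := by
    refine key 2 (by norm_num) _ _ _ hLm1 hL1 ?_
    have := h.LL (-1) 1
    norm_num at this
    exact this
  have hL : ∀ n : ℤ, h.b (SVIdx.L n) ∈ S := by
    intro n
    induction n using Int.induction_on with
    | zero => exact hL0
    | succ i hi =>
      rcases Nat.lt_or_ge i 2 with hlt | hge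
      · interval_cases i
        · exact hL1
        · exact hL2
      · refine key ((i : ℂ) - 1) ?_ _ _ _ hL1 hi ?_
        · have : (i : ℂ) ≠ 1 := by
            intro hc
            have : (i : ℤ) = 1 := by exact_mod_cast hc
            omega
          intro hc
          apply this
          linear_combination hc
        · have := h.LL 1 i
          have hidx : (1 : ℤ) + i = (i : ℤ) + 1 := by ring
          rw [hidx] at this
          convert this using 2
          push_cast
          ring
    | pred i hi =>
      rcases Nat.lt_or_ge i 2 with hlt | hge
      · interval_cases i
        · exact hLm1
        · exact hLm2
      · refine key (-(i : ℂ) + 1) ?_ _ _ _ hLm1 hi ?_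
        · have : (i : ℂ) ≠ 1 := by
            intro hc
            have : (i : ℤ) = 1 := by exact_mod_cast hc
            omega
          intro hc
          apply this
          linear_combination -hc
        · have := h.LL (-1) (-(i : ℤ))
          have hidx : (-1 : ℤ) + (-(i : ℤ)) = -(i : ℤ) - 1 := by ring
          rw [hidx] at this
          convert this using 2
          push_cast
          ring
  have hN : ∀ n : ℤ, h.b (SVIdx.N n) ∈ S := by
    intro n
    refine key 1 one_ne_zero _ _ _ (hL (n - 1)) hN1 ?_
    have := h.LN (n - 1) 1
    have hidx : n - 1 + 1 = n := by ring
    rw [hidx] at this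
    simpa using this
  have hY : ∀ n : ℤ, h.b (SVIdx.Y n) ∈ S := by
    intro n
    have := h.NY n 0
    rw [add_zero] at this
    rw [← this]
    exact S.lie_mem (hN n) hY0
  have hM : ∀ n : ℤ, h.b (SVIdx.M n) ∈ S := by
    intro n
    rcases eq_or_ne n (-1) with rfl | hn
    · refine key 2 (by norm_num) _ _ _ (hY 0) (hY (-2)) ?_
      have := h.YY 0 (-2)
      norm_num at this
      exact this
    · refine key ((n : ℂ) + 1) ?_ _ _ _ (hY n) (hY (-1)) ?_
      · intro hc
        apply hn
        have : (n : ℂ) = -1 := by linear_combination hc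
        exact_mod_cast this
      · have := h.YY n (-1)
        have hidx : n + (-1) + 1 = n := by ring
        rw [hidx] at this
        convert this using 2
        push_cast
        ring
  have hall : ∀ i, h.b i ∈ S := by
    rintro (n | n | n | n)
    · exact hL n
    · exact hM n
    · exact hN n
    · exact hY n
  rw [← LieSubalgebra.toSubmodule_inj, LieSubalgebra.top_toSubmodule, eq_top_iff]
  have := h.b.span_eq
  rw [← this]
  refine Submodule.span_le.mpr ?_
  rintro x ⟨i, rfl⟩
  exact hall i
end

section
/- The center of the extended Schrödinger-Virasoro Lie algebra sv~ is trivial: if x ∈ sv~ satisfies [x,y]=0 for all y ∈ sv~, then x = 0. -/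
/-- eigenvalue of `ad (-L 0)` on basis vectors. -/
noncomputable def svEig : SVIdx → ℂ
  | SVIdx.L m => -(m : ℂ)
  | SVIdx.M m => -(m : ℂ)
  | SVIdx.N m => -(m : ℂ)
  | SVIdx.Y m => -((m : ℂ) + 1 / 2)

lemma svEig_ne_zero_Y (m : ℤ) : svEig (SVIdx.Y m) ≠ 0 := by
  simp only [svEig, neg_ne_zero]
  intro hc
  have h2 : ((2 * m + 1 : ℤ) : ℂ) = 0 := by push_cast; linear_combination 2 * hc
  have : (2 * m + 1 : ℤ) = 0 := by exact_mod_cast h2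
  omega

lemma svDiag {g : Type*} [LieRing g] [LieAlgebra ℂ g] (h : ExtSV g) (i : SVIdx) :
    ⁅h.b i, h.b (SVIdx.L 0)⁆ = svEig i • h.b i := by
  cases i with
  | L m => rw [h.LL m 0]; norm_num [svEig]
  | M m => rw [← lie_skew, h.LM 0 m]; simp [svEig]
  | N m => rw [← lie_skew, h.LN 0 m]; simp [svEig]
  | Y m =>
      rw [← lie_skew, h.LY 0 m]
      simp only [svEig, zero_add, Int.cast_zero, ← neg_smul]
      norm_num

/-- right bracket with L 0 as a linear map -/
noncomputable def svRmul {g : Type*} [LieRing g] [LieAlgebra ℂ g] (h : ExtSV g) : g →ₗ[ℂ] g where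
  toFun x := ⁅x, h.b (SVIdx.L 0)⁆
  map_add' x y := add_lie x y _
  map_smul' c x := smul_lie c x _

lemma svRepr_diag {g : Type*} [LieRing g] [LieAlgebra ℂ g] (h : ExtSV g) (x : g) (i : SVIdx) :
    h.b.repr ⁅x, h.b (SVIdx.L 0)⁆ i = svEig i * h.b.repr x i := by
  classical
  have key : (Finsupp.lapply i ∘ₗ h.b.repr.toLinearMap ∘ₗ svRmul h)
      = svEig i • (Finsupp.lapply i ∘ₗ h.b.repr.toLinearMap) := by
    apply h.b.ext
    intro j
    simp only [LinearMap.coe_comp, Function.comp_apply, LinearMap.smul_apply,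
      LinearEquiv.coe_coe, Finsupp.lapply_apply, svRmul, LinearMap.coe_mk, AddHom.coe_mk]
    rw [svDiag h j]
    simp only [map_smul, Module.Basis.repr_self, Finsupp.smul_apply, Finsupp.single_apply, smul_eq_mul]
    by_cases hij : j = i <;> simp [hij]
  have := LinearMap.congr_fun key x
  simpa [svRmul, mul_comm] using this

/-- The center of `sv~` is trivial. -/
theorem extSV_center_trivial {g : Type*} [LieRing g] [LieAlgebra ℂ g] (h : ExtSV g) :
    ∀ x : g, (∀ y : g, ⁅x, y⁆ = 0) → x = 0 := by
  classical
  intro x hx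
  have hzero : ∀ i : SVIdx, svEig i ≠ 0 → h.b.repr x i = 0 := by
    intro i hi
    have := svRepr_diag h x i
    rw [hx (h.b (SVIdx.L 0))] at this
    simp only [map_zero, Finsupp.coe_zero, Pi.zero_apply] at this
    exact (mul_eq_zero.mp this.symm).resolve_left hi
  set cL := h.b.repr x (SVIdx.L 0) with hcL
  set cM := h.b.repr x (SVIdx.M 0) with hcM
  set cN := h.b.repr x (SVIdx.N 0) with hcN
  have hx3 : x = cL • h.b (SVIdx.L 0) + cM • h.b (SVIdx.M 0) + cN • h.b (SVIdx.N 0) := by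
    apply h.b.repr.injective
    ext i
    have hrhs : h.b.repr (cL • h.b (SVIdx.L 0) + cM • h.b (SVIdx.M 0) + cN • h.b (SVIdx.N 0)) i
        = cL * (h.b.repr (h.b (SVIdx.L 0)) i) + cM * (h.b.repr (h.b (SVIdx.M 0)) i)
          + cN * (h.b.repr (h.b (SVIdx.N 0)) i) := by
      simp [Module.Basis.repr_self, Finsupp.single_apply, mul_ite, mul_one, mul_zero]
    rw [hrhs]
    cases i with
    | L m =>
        by_cases hm : m = 0
        · subst hm; simp [Module.Basis.repr_self, Finsupp.single_apply]; rfl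
        · rw [hzero _ (by simp [svEig, Int.cast_ne_zero, hm])]
          simp [Module.Basis.repr_self, Finsupp.single_apply, Ne.symm hm]
    | M m =>
        by_cases hm : m = 0
        · subst hm; simp [Module.Basis.repr_self, Finsupp.single_apply]; rfl
        · rw [hzero _ (by simp [svEig, Int.cast_ne_zero, hm])]
          simp [Module.Basis.repr_self, Finsupp.single_apply, Ne.symm hm]
    | N m =>
        by_cases hm : m = 0
        · subst hm; simp [Module.Basis.repr_self, Finsupp.single_apply]; rfl
        · rw [hzero _ (by simp [svEig, Int.cast_ne_zero, hm])]
          simp [Module.Basis.repr_self, Finsupp.single_apply, Ne.symm hm]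
    | Y m =>
        rw [hzero _ (svEig_ne_zero_Y m)]
        simp [Module.Basis.repr_self, Finsupp.single_apply]
  -- cL = 0 via bracket with L 1
  have hcL0 : cL = 0 := by
    have hb := hx (h.b (SVIdx.L 1))
    rw [hx3] at hb
    have e1 : ⁅h.b (SVIdx.L 0), h.b (SVIdx.L 1)⁆ = h.b (SVIdx.L 1) := by
      rw [h.LL 0 1]; norm_num
    have e2 : ⁅h.b (SVIdx.M 0), h.b (SVIdx.L 1)⁆ = 0 := by
      rw [← lie_skew, h.LM 1 0]; simp
    have e3 : ⁅h.b (SVIdx.N 0), h.b (SVIdx.L 1)⁆ = 0 := by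
      rw [← lie_skew, h.LN 1 0]; simp
    rw [add_lie, add_lie, smul_lie, smul_lie, smul_lie, e1, e2, e3] at hb
    simp only [smul_zero, add_zero] at hb
    exact (smul_eq_zero.mp hb).resolve_right (h.b.ne_zero _)
  rw [hcL0, zero_smul, zero_add] at hx3
  -- cN = 0 via bracket with Y 0
  have hcN0 : cN = 0 := by
    have hb := hx (h.b (SVIdx.Y 0))
    rw [hx3] at hb
    rw [add_lie, smul_lie, smul_lie, h.MY 0 0, h.NY 0 0] at hb
    simp only [smul_zero, zero_add, add_zero] at hb
    exact (smul_eq_zero.mp hb).resolve_right (h.b.ne_zero _)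
  rw [hcN0, zero_smul, add_zero] at hx3
  -- cM = 0 via bracket with N 1
  have hcM0 : cM = 0 := by
    have hb := hx (h.b (SVIdx.N 1))
    rw [hx3] at hb
    rw [smul_lie, ← lie_skew, h.NM 1 0] at hb
    simp only [smul_neg, neg_eq_zero, smul_smul] at hb
    have := (smul_eq_zero.mp hb).resolve_right (h.b.ne_zero _)
    simpa using this
  rw [hx3, hcM0, zero_smul]
end

section
/- Every derivation of the extended Schrödinger-Virasoro Lie algebra sv~ is an inner derivation, i.e., H^1(sv~, sv~) = 0. -/
deriving instance DecidableEq for SVIdx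

namespace SVHelper
open SVIdx

noncomputable def svdeg : SVIdx → ℂ
  | L n => (n : ℂ)
  | M n => (n : ℂ)
  | N n => (n : ℂ)
  | Y n => (n : ℂ) + 1/2

lemma svdeg_int_cases (j : SVIdx) (n : ℤ) (hj : svdeg j = (n : ℂ)) :
    j = L n ∨ j = M n ∨ j = N n := by
  cases j with
  | L k =>
      simp only [svdeg] at hj
      exact Or.inl (by have : k = n := by exact_mod_cast hj
                       rw [this])
  | M k =>
      simp only [svdeg] at hj
      exact Or.inr (Or.inl (by have : k = n := by exact_mod_cast hj
                               rw [this]))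
  | N k =>
      simp only [svdeg] at hj
      exact Or.inr (Or.inr (by have : k = n := by exact_mod_cast hj
                               rw [this]))
  | Y k =>
      exfalso
      have h2 : ((2*k+1 : ℤ) : ℂ) = ((2*n : ℤ) : ℂ) := by
        push_cast
        simp only [svdeg] at hj
        linear_combination 2*hj
      have h3 : (2*k+1 : ℤ) = 2*n := Int.cast_injective h2
      omega

lemma svdeg_half_cases (j : SVIdx) (n : ℤ) (hj : svdeg j = (n : ℂ) + 1/2) : j = Y n := by
  have key : ∀ k : ℤ, (k : ℂ) = (n : ℂ) + 1/2 → False := by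
    intro k hk
    have h2 : ((2*k : ℤ) : ℂ) = ((2*n+1 : ℤ) : ℂ) := by push_cast; linear_combination 2*hk
    have h3 : (2*k : ℤ) = 2*n+1 := Int.cast_injective h2
    omega
  cases j with
  | L k => exact absurd (by simpa [svdeg] using hj) (fun hh => key k hh)
  | M k => exact absurd (by simpa [svdeg] using hj) (fun hh => key k hh)
  | N k => exact absurd (by simpa [svdeg] using hj) (fun hh => key k hh)
  | Y k =>
      have : (k : ℂ) = (n : ℂ) := by
        simp only [svdeg] at hj
        linear_combination hj
      have : k = n := by exact_mod_cast this
      rw [this]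

variable {g : Type*} [LieRing g] [LieAlgebra ℂ g]

lemma recon3 (b : Module.Basis SVIdx ℂ g) {v : g} {i1 i2 i3 : SVIdx} (h12 : i1 ≠ i2) (h13 : i1 ≠ i3)
    (h23 : i2 ≠ i3) (hs : ∀ j, j ≠ i1 → j ≠ i2 → j ≠ i3 → b.repr v j = 0) :
    v = b.repr v i1 • b i1 + b.repr v i2 • b i2 + b.repr v i3 • b i3 := by
  apply b.repr.injective
  ext j
  simp only [map_add, map_smul, Finsupp.add_apply, Finsupp.smul_apply, Module.Basis.repr_self,
    smul_eq_mul]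
  by_cases e1 : j = i1
  · subst e1
    rw [Finsupp.single_eq_same, Finsupp.single_eq_of_ne' (Ne.symm h12),
      Finsupp.single_eq_of_ne' (Ne.symm h13)]
    ring
  by_cases e2 : j = i2
  · subst e2
    rw [Finsupp.single_eq_same, Finsupp.single_eq_of_ne' h12,
      Finsupp.single_eq_of_ne' (Ne.symm h23)]
    ring
  by_cases e3 : j = i3
  · subst e3
    rw [Finsupp.single_eq_same, Finsupp.single_eq_of_ne' h13, Finsupp.single_eq_of_ne' h23]
    ring
  · rw [hs j e1 e2 e3, Finsupp.single_eq_of_ne' (Ne.symm e1), Finsupp.single_eq_of_ne' (Ne.symm e2),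
      Finsupp.single_eq_of_ne' (Ne.symm e3)]
    ring

lemma recon1 (b : Module.Basis SVIdx ℂ g) {v : g} {i1 : SVIdx}
    (hs : ∀ j, j ≠ i1 → b.repr v j = 0) :
    v = b.repr v i1 • b i1 := by
  apply b.repr.injective
  ext j
  simp only [map_smul, Finsupp.smul_apply, Module.Basis.repr_self, smul_eq_mul]
  by_cases e1 : j = i1
  · subst e1; rw [Finsupp.single_eq_same]; ring
  · rw [hs j e1, Finsupp.single_eq_of_ne' (Ne.symm e1)]; ring

lemma repr_diag (b : Module.Basis SVIdx ℂ g) (c : SVIdx → ℂ) (v : g) (j : SVIdx) :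
    b.repr ((b.constr ℂ fun i => c i • b i) v) j = c j * b.repr v j := by
  have hm : (Finsupp.lapply j : (SVIdx →₀ ℂ) →ₗ[ℂ] ℂ) ∘ₗ (b.repr : g →ₗ[ℂ] (SVIdx →₀ ℂ))
        ∘ₗ (b.constr ℂ fun i => c i • b i)
      = c j • ((Finsupp.lapply j : (SVIdx →₀ ℂ) →ₗ[ℂ] ℂ) ∘ₗ (b.repr : g →ₗ[ℂ] (SVIdx →₀ ℂ))) := by
    apply b.ext
    intro i
    simp only [LinearMap.coe_comp, Function.comp_apply, Module.Basis.constr_basis, map_smul,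
      Module.Basis.repr_self, LinearMap.smul_apply, Finsupp.lapply_apply, Finsupp.smul_apply,
      smul_eq_mul]
    by_cases hij : i = j
    · subst hij; simp [Module.Basis.repr_self_apply]
    · simp [Module.Basis.repr_self_apply, hij]
  simpa using LinearMap.congr_fun hm v

end SVHelper

namespace SVHelper
open SVIdx

variable {g : Type*} [LieRing g] [LieAlgebra ℂ g]

lemma bML (h : ExtSV g) (m n : ℤ) :
    ⁅h.b (M m), h.b (L n)⁆ = (-(m:ℂ)) • h.b (M (m+n)) := by
  rw [← lie_skew, h.LM n m, Int.add_comm n m, neg_smul]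

lemma bNL (h : ExtSV g) (m n : ℤ) :
    ⁅h.b (N m), h.b (L n)⁆ = (-(m:ℂ)) • h.b (N (m+n)) := by
  rw [← lie_skew, h.LN n m, Int.add_comm n m, neg_smul]

lemma bYL (h : ExtSV g) (m n : ℤ) :
    ⁅h.b (Y m), h.b (L n)⁆ = (-((m:ℂ) + (1 - (n:ℂ))/2)) • h.b (Y (m+n)) := by
  rw [← lie_skew, h.LY n m, Int.add_comm n m, neg_smul]

lemma bMN (h : ExtSV g) (m n : ℤ) :
    ⁅h.b (M m), h.b (N n)⁆ = (-2:ℂ) • h.b (M (m+n)) := by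
  rw [← lie_skew, h.NM n m, Int.add_comm n m, neg_smul]

lemma bYN (h : ExtSV g) (m n : ℤ) :
    ⁅h.b (Y m), h.b (N n)⁆ = (-1:ℂ) • h.b (Y (m+n)) := by
  rw [← lie_skew, h.NY n m, Int.add_comm n m, neg_smul, one_smul]

lemma bYM (h : ExtSV g) (m n : ℤ) :
    ⁅h.b (Y m), h.b (M n)⁆ = 0 := by
  rw [← lie_skew, h.MY n m, neg_zero]

lemma bracketL0 (h : ExtSV g) (i : SVIdx) : ⁅h.b (L 0), h.b i⁆ = svdeg i • h.b i := by
  cases i with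
  | L n => rw [h.LL 0 n]; norm_num [svdeg]
  | M n => rw [h.LM 0 n]; norm_num [svdeg]
  | N n => rw [h.LN 0 n]; norm_num [svdeg]
  | Y n => rw [h.LY 0 n]; norm_num [svdeg]

lemma adL0 (h : ExtSV g) (v : g) (j : SVIdx) :
    h.b.repr ⁅h.b (L 0), v⁆ j = svdeg j * h.b.repr v j := by
  have hm : (LieAlgebra.ad ℂ g (h.b (L 0)) : g →ₗ[ℂ] g)
      = h.b.constr ℂ fun i => svdeg i • h.b i := by
    apply h.b.ext
    intro i
    rw [LieAlgebra.ad_apply, Module.Basis.constr_basis, bracketL0]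
  have h2 : ⁅h.b (L 0), v⁆ = (h.b.constr ℂ fun i => svdeg i • h.b i) v := by
    rw [← hm, LieAlgebra.ad_apply]
  rw [h2, repr_diag]

lemma star (h : ExtSV g) (E : LieDerivation ℂ g g) (i j : SVIdx) :
    h.b.repr ⁅E (h.b (L 0)), h.b i⁆ j = (svdeg i - svdeg j) * h.b.repr (E (h.b i)) j := by
  have h2 := E.apply_lie_eq_add (h.b (L 0)) (h.b i)
  rw [bracketL0 h i, map_smul] at h2
  have h3 : ⁅E (h.b (L 0)), h.b i⁆ = svdeg i • E (h.b i) - ⁅h.b (L 0), E (h.b i)⁆ := by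
    rw [eq_sub_iff_add_eq, add_comm, ← h2]
  rw [h3, map_sub, Finsupp.sub_apply, map_smul, Finsupp.smul_apply, adL0, smul_eq_mul]
  ring

end SVHelper

open SVHelper SVIdx

/-- Every derivation of `sv~` is inner, i.e. `H¹(sv~, sv~) = 0`. -/
theorem extSV_derivations_inner {g : Type*} [LieRing g] [LieAlgebra ℂ g] (h : ExtSV g) :
    ∀ D : LieDerivation ℂ g g, ∃ z : g, ∀ x : g, D x = ⁅z, x⁆ := by
  classical
  intro D
  set w : g := (h.b.constr ℂ fun i => (svdeg i)⁻¹ • h.b i) (D (h.b (L 0))) with hw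
  set E : LieDerivation ℂ g g := D - LieDerivation.inner ℂ g g w with hEdef
  have hEx : ∀ x, E x = D x + ⁅w, x⁆ := by
    intro x
    rw [hEdef, LieDerivation.sub_apply, LieDerivation.inner_apply_apply, sub_eq_add_neg,
      lie_skew]
  -- E (L 0) is supported in degree 0
  have hE0 : ∀ j, svdeg j ≠ 0 → h.b.repr (E (h.b (L 0))) j = 0 := by
    intro j hj
    rw [hEx, map_add, Finsupp.add_apply]
    have h1 : h.b.repr ⁅w, h.b (L 0)⁆ j = -(svdeg j * h.b.repr w j) := by
      rw [← lie_skew, map_neg, Finsupp.neg_apply, adL0]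
    rw [h1, hw, repr_diag, mul_inv_cancel_left₀ hj]
    ring
  obtain ⟨al, be, ga, hrec0⟩ : ∃ al be ga : ℂ,
      E (h.b (L 0)) = al • h.b (L 0) + be • h.b (M 0) + ga • h.b (N 0) := by
    refine ⟨_, _, _, recon3 h.b (by simp) (by simp) (by simp) ?_⟩
    intro j h1 h2 h3
    apply hE0
    intro hc
    rcases svdeg_int_cases j 0 (by simpa using hc) with rfl | rfl | rfl
    exacts [h1 rfl, h2 rfl, h3 rfl]
  have hb1 : ∀ i : SVIdx, ⁅E (h.b (L 0)), h.b i⁆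
      = al • ⁅h.b (L 0), h.b i⁆ + be • ⁅h.b (M 0), h.b i⁆ + ga • ⁅h.b (N 0), h.b i⁆ := by
    intro i
    rw [hrec0]
    simp only [add_lie, smul_lie]
  have hal : al = 0 := by
    have h2 := star h E (L 1) (L 1)
    rw [hb1 (L 1), h.LL 0 1, bML h 0 1, bNL h 0 1] at h2
    simp [Module.Basis.repr_self_apply, svdeg] at h2
    linear_combination h2
  have hga : ga = 0 := by
    have h2 := star h E (M 1) (M 1)
    rw [hb1 (M 1), h.LM 0 1, h.MM 0 1, h.NM 0 1] at h2
    simp [Module.Basis.repr_self_apply, svdeg, hal] at h2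
    linear_combination h2
  have hbe : be = 0 := by
    have h2 := star h E (N 1) (M 1)
    rw [hb1 (N 1), h.LN 0 1, bMN h 0 1, h.NN 0 1] at h2
    simp [Module.Basis.repr_self_apply, svdeg, hal] at h2
    linear_combination h2
  have hE00 : E (h.b (L 0)) = 0 := by
    rw [hrec0, hal, hbe, hga]
    simp
  have hpres : ∀ i j : SVIdx, svdeg j ≠ svdeg i → h.b.repr (E (h.b i)) j = 0 := by
    intro i j hne
    have h2 := (star h E i j).symm
    rw [hE00] at h2
    simp only [zero_lie, map_zero, Finsupp.coe_zero, Pi.zero_apply] at h2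
    rcases mul_eq_zero.mp h2 with hcase | hcase
    · exact absurd (sub_eq_zero.mp hcase).symm hne
    · exact hcase
  -- the rows of E
  obtain ⟨a, bb, cc, hEL⟩ : ∃ a bb cc : ℤ → ℂ,
      ∀ n : ℤ, E (h.b (L n)) = a n • h.b (L n) + bb n • h.b (M n) + cc n • h.b (N n) := by
    refine ⟨_, _, _, fun n => recon3 h.b (by simp) (by simp) (by simp) ?_⟩
    intro j h1 h2 h3
    apply hpres
    intro hc
    rcases svdeg_int_cases j n (by simpa [svdeg] using hc) with rfl | rfl | rfl
    exacts [h1 rfl, h2 rfl, h3 rfl]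
  obtain ⟨p, q, r, hEM⟩ : ∃ p q r : ℤ → ℂ,
      ∀ n : ℤ, E (h.b (M n)) = p n • h.b (L n) + q n • h.b (M n) + r n • h.b (N n) := by
    refine ⟨_, _, _, fun n => recon3 h.b (by simp) (by simp) (by simp) ?_⟩
    intro j h1 h2 h3
    apply hpres
    intro hc
    rcases svdeg_int_cases j n (by simpa [svdeg] using hc) with rfl | rfl | rfl
    exacts [h1 rfl, h2 rfl, h3 rfl]
  obtain ⟨s, t, u, hEN⟩ : ∃ s t u : ℤ → ℂ,
      ∀ n : ℤ, E (h.b (N n)) = s n • h.b (L n) + t n • h.b (M n) + u n • h.b (N n) := by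
    refine ⟨_, _, _, fun n => recon3 h.b (by simp) (by simp) (by simp) ?_⟩
    intro j h1 h2 h3
    apply hpres
    intro hc
    rcases svdeg_int_cases j n (by simpa [svdeg] using hc) with rfl | rfl | rfl
    exacts [h1 rfl, h2 rfl, h3 rfl]
  obtain ⟨y, hEY⟩ : ∃ y : ℤ → ℂ, ∀ n : ℤ, E (h.b (Y n)) = y n • h.b (Y n) := by
    refine ⟨_, fun n => recon1 h.b ?_⟩
    intro j h1
    apply hpres
    intro hc
    exact h1 (svdeg_half_cases j n (by simpa [svdeg] using hc))
  -- coefficient equations from the structure relations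
  have relLN : ∀ m n : ℤ,
      ((n:ℂ) * s (m+n) = ((n:ℂ) - m) * s n) ∧
      ((n:ℂ) * t (m+n) = (n:ℂ) * t n - 2 * bb m) ∧
      ((n:ℂ) * u (m+n) = (n:ℂ) * u n + (n:ℂ) * a m) := by
    intro m n
    have e := E.apply_lie_eq_add (h.b (L m)) (h.b (N n))
    rw [h.LN m n, map_smul, hEN (m+n), hEL m, hEN n] at e
    simp only [lie_add, add_lie, lie_smul, smul_lie, smul_add, smul_smul,
      h.LL, h.LN, h.LM, h.NN, bMN h, bNL h, lie_zero, zero_lie, smul_zero, add_zero,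
      zero_add] at e
    refine ⟨?_, ?_, ?_⟩
    · have ee := congrArg (fun v => h.b.repr v (L (m+n))) e
      simp [Module.Basis.repr_self_apply] at ee
      linear_combination ee
    · have ee := congrArg (fun v => h.b.repr v (M (m+n))) e
      simp [Module.Basis.repr_self_apply] at ee
      linear_combination ee
    · have ee := congrArg (fun v => h.b.repr v (N (m+n))) e
      simp [Module.Basis.repr_self_apply] at ee
      linear_combination ee
  have relNN : ∀ m n : ℤ,
      (s m * n - (m:ℂ) * s n = 0) ∧ (t m = t n) := by
    intro m n
    have e := E.apply_lie_eq_add (h.b (N m)) (h.b (N n))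
    rw [h.NN m n, map_zero, hEN m, hEN n] at e
    simp only [lie_add, add_lie, lie_smul, smul_lie, smul_add, smul_smul,
      h.LN, h.NN, h.NM, bMN h, bNL h, lie_zero, zero_lie, smul_zero, add_zero,
      zero_add] at e
    constructor
    · have ee := congrArg (fun v => h.b.repr v (N (m+n))) e
      simp [Module.Basis.repr_self_apply] at ee
      linear_combination -ee
    · have ee := congrArg (fun v => h.b.repr v (M (m+n))) e
      simp [Module.Basis.repr_self_apply] at ee
      linear_combination ee / 2
  have relNM : ∀ m n : ℤ,
      (p (m+n) = 0) ∧
      (2 * q (m+n) = 2 * q n + s m * n + 2 * u m) ∧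
      (2 * r (m+n) = -(m:ℂ) * p n) := by
    intro m n
    have e := E.apply_lie_eq_add (h.b (N m)) (h.b (M n))
    rw [h.NM m n, map_smul, hEM (m+n), hEN m, hEM n] at e
    simp only [lie_add, add_lie, lie_smul, smul_lie, smul_add, smul_smul,
      h.LM, h.NM, h.NN, h.MM, bNL h, bMN h, lie_zero, zero_lie, smul_zero, add_zero,
      zero_add] at e
    refine ⟨?_, ?_, ?_⟩
    · have ee := congrArg (fun v => h.b.repr v (L (m+n))) e
      simp [Module.Basis.repr_self_apply] at ee
      linear_combination ee
    · have ee := congrArg (fun v => h.b.repr v (M (m+n))) e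
      simp [Module.Basis.repr_self_apply] at ee
      linear_combination ee
    · have ee := congrArg (fun v => h.b.repr v (N (m+n))) e
      simp [Module.Basis.repr_self_apply] at ee
      linear_combination ee
  have relLY : ∀ m n : ℤ,
      ((n:ℂ)+(1-(m:ℂ))/2) * y (m+n) = ((n:ℂ)+(1-(m:ℂ))/2) * (y n + a m) + cc m := by
    intro m n
    have e := E.apply_lie_eq_add (h.b (L m)) (h.b (Y n))
    rw [h.LY m n, map_smul, hEY (m+n), hEL m, hEY n] at e
    simp only [lie_add, add_lie, lie_smul, smul_lie, smul_add, smul_smul,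
      h.LY, h.MY, h.NY, lie_zero, zero_lie, smul_zero, add_zero, zero_add] at e
    have ee := congrArg (fun v => h.b.repr v (Y (m+n))) e
    simp [Module.Basis.repr_self_apply] at ee
    linear_combination ee
  have relNY : ∀ m n : ℤ,
      y (m+n) = y n + s m * ((n:ℂ)+(1-(m:ℂ))/2) + u m := by
    intro m n
    have e := E.apply_lie_eq_add (h.b (N m)) (h.b (Y n))
    rw [h.NY m n, hEY (m+n), hEN m, hEY n] at e
    simp only [lie_add, add_lie, lie_smul, smul_lie, smul_add, smul_smul,
      h.LY, h.MY, h.NY, lie_zero, zero_lie, smul_zero, add_zero, zero_add] at e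
    have ee := congrArg (fun v => h.b.repr v (Y (m+n))) e
    simp [Module.Basis.repr_self_apply] at ee
    linear_combination ee
  have relYY : ∀ m n : ℤ,
      ((m:ℂ) - n) * q (m+n+1) = ((m:ℂ) - n) * (y m + y n) := by
    intro m n
    have e := E.apply_lie_eq_add (h.b (Y m)) (h.b (Y n))
    rw [h.YY m n, map_smul, hEM (m+n+1), hEY m, hEY n] at e
    simp only [lie_add, add_lie, lie_smul, smul_lie, smul_add, smul_smul,
      h.YY, lie_zero, zero_lie, smul_zero, add_zero, zero_add] at e
    have ee := congrArg (fun v => h.b.repr v (M (m+n+1))) e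
    simp [Module.Basis.repr_self_apply] at ee
    linear_combination ee
  -- solve the equations
  have hp : ∀ k : ℤ, p k = 0 := by
    intro k
    have h1 := (relNM k 0).1
    simpa using h1
  have hr : ∀ k : ℤ, r k = 0 := by
    intro k
    have h1 := (relNM 0 k).2.2
    rw [hp k] at h1
    simp at h1
    linear_combination h1
  have ht : ∀ k : ℤ, t k = t 0 := fun k => (relNN k 0).2
  have hbb : ∀ k : ℤ, bb k = 0 := by
    intro k
    have h1 := (relLN k 1).2.1
    rw [ht (k+1), ht 1] at h1
    push_cast at h1
    linear_combination h1 / 2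
  have hsk : ∀ k : ℤ, s k = (k:ℂ) * s 1 := by
    intro k
    have h1 := (relNN k 1).1
    push_cast at h1
    linear_combination h1
  have hs1 : s 1 = 0 := by
    have h1 := (relLN 1 1).1
    have h2 := hsk 2
    push_cast at h1 h2
    rw [h2] at h1
    linear_combination h1 / 2
  have hs : ∀ k : ℤ, s k = 0 := by
    intro k
    rw [hsk k, hs1, mul_zero]
  have hyu : ∀ m n : ℤ, y (m+n) = u m + y n := by
    intro m n
    have h1 := relNY m n
    rw [hs m] at h1
    linear_combination h1
  have hau : ∀ m : ℤ, a m = u m := by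
    intro m
    have h0 := relLY m 0
    have h1 := relLY m 1
    rw [hyu m 0] at h0
    rw [hyu m 1] at h1
    push_cast at h0 h1
    linear_combination h0 - h1
  have hcc : ∀ m : ℤ, cc m = 0 := by
    intro m
    have h0 := relLY m 0
    rw [hyu m 0, hau m] at h0
    push_cast at h0
    linear_combination -h0
  have hadd : ∀ m n : ℤ, y (m+n) = a m + y n := by
    intro m n
    rw [hau m]
    exact hyu m n
  have hy : ∀ k : ℤ, y k = a k + y 0 := by
    intro k
    have h1 := hadd k 0
    simpa using h1
  have haadd : ∀ m k : ℤ, a (m+k) = a m + a k := by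
    intro m k
    have h1 := hadd m k
    have h2 := hy (m+k)
    have h3 := hy k
    linear_combination h1 - h2 + h3
  have hq : ∀ k : ℤ, q k = q 0 + a k := by
    intro k
    have h1 := (relNM k 0).2.1
    rw [hs k] at h1
    rw [hau k]
    have h2 : k + 0 = k := by ring
    rw [h2] at h1
    linear_combination h1 / 2
  have halin : ∀ k : ℤ, a k = (k:ℂ) * a 1 := by
    intro k
    let A : ℤ →+ ℂ := AddMonoidHom.mk' a haadd
    have h1 : a k = A k := rfl
    have h2 : A k = A (k • (1:ℤ)) := by norm_num
    rw [h1, h2, map_zsmul A k 1]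
    show k • a 1 = (k:ℂ) * a 1
    rw [zsmul_eq_mul]
  have ha2 : a 2 = a 1 + a 1 := by
    have h1 := haadd 1 1
    norm_num at h1
    exact h1
  have hphi : 2 * y 0 = q 0 + a 1 := by
    have e := relYY 1 0
    norm_num at e
    linear_combination -e - hy 1 + hq 2 + ha2
  -- the inner element
  set z0 : g := a 1 • h.b (L 0) + (q 0 / 2) • h.b (N 0) - (t 0 / 2) • h.b (M 0) with hz0
  have hfinal : ∀ x : g, E x = ⁅z0, x⁆ := by
    have hmaps : (E : g →ₗ[ℂ] g) = (LieAlgebra.ad ℂ g z0 : g →ₗ[ℂ] g) := by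
      apply h.b.ext
      intro i
      have hlhs : (E : g →ₗ[ℂ] g) (h.b i) = E (h.b i) := rfl
      rw [hlhs, LieAlgebra.ad_apply, hz0]
      cases i with
      | L n =>
          rw [hEL n, hbb n, hcc n, halin n]
          simp only [sub_lie, add_lie, smul_lie, h.LL, bNL h, bML h]
          norm_num
          module
      | M n =>
          rw [hEM n, hp n, hr n, hq n, halin n]
          simp only [sub_lie, add_lie, smul_lie, h.LM, h.NM, h.MM]
          norm_num
          module
      | N n =>
          rw [hEN n, hs n, ht n, ← hau n, halin n]
          simp only [sub_lie, add_lie, smul_lie, h.LN, h.NN, bMN h]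
          norm_num
          module
      | Y n =>
          rw [hEY n, hy n, halin n]
          simp only [sub_lie, add_lie, smul_lie, h.LY, h.NY, h.MY]
          norm_num
          match_scalars
          linear_combination hphi / 2
    intro x
    have := LinearMap.congr_fun hmaps x
    simpa [LieAlgebra.ad_apply] using this
  refine ⟨z0 - w, ?_⟩
  intro x
  have h1 : D x = E x - ⁅w, x⁆ := by
    rw [hEx x]
    abel
  rw [h1, hfinal x]
  exact (sub_lie z0 w x).symm
end

section
/- Let D be a degree-zero derivation of sv~, i.e., a derivation satisfying D(L_m), D(M_m), D(N_m) ∈ span{L_m, M_m, N_m} and D(Y_{m+1/2}) ∈ ℂ Y_{m+1/2} for all m. Then there exist a, b, c ∈ ℂ such that D(L_m)=maL_m, D(M_m)=(2b−a+ma)M_m, D(N_m)=cM_m+maN_m, D(Y_{m+1/2})=(b+ma)Y_{m+1/2} for all m ∈ ℤ; equivalently D = ad(aL_0 − (c/2)M_0 + (b − a/2)N_0). -/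
section Aux

variable {g : Type*} [LieRing g] [LieAlgebra ℂ g] (h : ExtSV g)

/-- Skew-symmetric versions of some structure brackets. -/
lemma extSV_ML (m n : ℤ) : ⁅h.b (SVIdx.M m), h.b (SVIdx.L n)⁆ =
    (-(m : ℂ)) • h.b (SVIdx.M (m + n)) := by
  rw [← lie_skew, h.LM n m, add_comm n m, neg_smul]

lemma extSV_NL (m n : ℤ) : ⁅h.b (SVIdx.N m), h.b (SVIdx.L n)⁆ =
    (-(m : ℂ)) • h.b (SVIdx.N (m + n)) := by
  rw [← lie_skew, h.LN n m, add_comm n m, neg_smul]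

lemma extSV_YL (m n : ℤ) : ⁅h.b (SVIdx.Y m), h.b (SVIdx.L n)⁆ =
    (-((m : ℂ) + (1 - (n : ℂ)) / 2)) • h.b (SVIdx.Y (m + n)) := by
  rw [← lie_skew, h.LY n m, add_comm n m, neg_smul]

lemma extSV_MN (m n : ℤ) : ⁅h.b (SVIdx.M m), h.b (SVIdx.N n)⁆ =
    (-2 : ℂ) • h.b (SVIdx.M (m + n)) := by
  rw [← lie_skew, h.NM n m, add_comm n m]
  simp

lemma extSV_YN (m n : ℤ) : ⁅h.b (SVIdx.Y m), h.b (SVIdx.N n)⁆ =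
    (-1 : ℂ) • h.b (SVIdx.Y (m + n)) := by
  rw [← lie_skew, h.NY n m, add_comm n m]
  simp

lemma extSV_YM (m n : ℤ) : ⁅h.b (SVIdx.Y m), h.b (SVIdx.M n)⁆ = 0 := by
  rw [← lie_skew, h.MY n m, neg_zero]

end Aux

/-- A degree-zero derivation of `sv~` is inner, with the explicit form
`D = ad(a L₀ - (c/2) M₀ + (b - a/2) N₀)`. -/
theorem extSV_degree_zero_derivation {g : Type*} [LieRing g] [LieAlgebra ℂ g] (h : ExtSV g)
    (D : LieDerivation ℂ g g)
    (hL : ∀ m : ℤ, ∃ α β γ : ℂ,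
      D (h.b (SVIdx.L m)) = α • h.b (SVIdx.L m) + β • h.b (SVIdx.M m) + γ • h.b (SVIdx.N m))
    (hM : ∀ m : ℤ, ∃ α β γ : ℂ,
      D (h.b (SVIdx.M m)) = α • h.b (SVIdx.L m) + β • h.b (SVIdx.M m) + γ • h.b (SVIdx.N m))
    (hN : ∀ m : ℤ, ∃ α β γ : ℂ,
      D (h.b (SVIdx.N m)) = α • h.b (SVIdx.L m) + β • h.b (SVIdx.M m) + γ • h.b (SVIdx.N m))
    (hY : ∀ m : ℤ, ∃ c : ℂ, D (h.b (SVIdx.Y m)) = c • h.b (SVIdx.Y m)) :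
    ∃ a b c : ℂ,
      (∀ m : ℤ, D (h.b (SVIdx.L m)) = ((m : ℂ) * a) • h.b (SVIdx.L m)) ∧
      (∀ m : ℤ, D (h.b (SVIdx.M m)) = (2 * b - a + (m : ℂ) * a) • h.b (SVIdx.M m)) ∧
      (∀ m : ℤ, D (h.b (SVIdx.N m)) =
        c • h.b (SVIdx.M m) + ((m : ℂ) * a) • h.b (SVIdx.N m)) ∧
      (∀ m : ℤ, D (h.b (SVIdx.Y m)) = (b + (m : ℂ) * a) • h.b (SVIdx.Y m)) ∧
      (∀ x : g, D x =
        ⁅a • h.b (SVIdx.L 0) - (c / 2) • h.b (SVIdx.M 0) + (b - a / 2) • h.b (SVIdx.N 0), x⁆) := by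
  classical
  choose A B G hLw using hL
  choose P Q R hMw using hM
  choose S T U hNw using hN
  choose W hYw using hY
  -- Step 1: from [M_m, Y_n] = 0 we get P = R = 0.
  have E1 : ∀ m n : ℤ, P m * ((n : ℂ) + (1 - (m : ℂ)) / 2) + R m = 0 := by
    intro m n
    have E := D.apply_lie_eq_add (h.b (SVIdx.M m)) (h.b (SVIdx.Y n))
    rw [h.MY m n, map_zero, hMw m, hYw n] at E
    simp only [add_lie, smul_lie, lie_smul, h.LY, h.NY, h.MY, smul_zero, zero_add, add_zero,
      smul_smul] at E
    have E2 := congrArg (fun z => h.b.repr z (SVIdx.Y (m + n))) E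
    simp [Finsupp.single_apply] at E2
    linear_combination -E2
  have hP : ∀ m : ℤ, P m = 0 := by
    intro m
    have h0 := E1 m 0
    have h1 := E1 m 1
    push_cast at h0 h1
    linear_combination h1 - h0
  have hR : ∀ m : ℤ, R m = 0 := by
    intro m
    have h0 := E1 m 0
    rw [hP m] at h0
    push_cast at h0
    linear_combination h0
  -- Step 2: from [L_1, N_1] we get S 2 = 0.
  have hS2 : S 2 = 0 := by
    have E := D.apply_lie_eq_add (h.b (SVIdx.L 1)) (h.b (SVIdx.N 1))
    rw [h.LN 1 1] at E
    rw [map_smul, hNw (1 + 1), hLw 1, hNw 1] at E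
    simp only [add_lie, lie_add, smul_lie, lie_smul, h.LL, h.LM, h.LN, extSV_MN, h.NN, lie_zero,
      smul_zero, zero_add, add_zero, smul_smul, smul_add] at E
    have E2 := congrArg (fun z => h.b.repr z (SVIdx.L (1 + 1 : ℤ))) E
    simp [Finsupp.single_apply] at E2
    exact E2
  -- Step 3: from [N_m, N_2] = 0 we get S m = 0 and T m constant.
  have ENN : ∀ m : ℤ, (0 : g) = ⁅h.b (SVIdx.N m), D (h.b (SVIdx.N 2))⁆ +
      ⁅D (h.b (SVIdx.N m)), h.b (SVIdx.N 2)⁆ := by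
    intro m
    have E := D.apply_lie_eq_add (h.b (SVIdx.N m)) (h.b (SVIdx.N 2))
    rw [h.NN m 2, map_zero] at E
    exact E
  have hS : ∀ m : ℤ, S m = 0 := by
    intro m
    have E := ENN m
    rw [hNw m, hNw 2] at E
    simp only [add_lie, lie_add, smul_lie, lie_smul, h.LN, extSV_MN, h.NN, extSV_NL, h.NM,
      lie_zero, smul_zero, zero_add, add_zero, smul_smul] at E
    have E2 := congrArg (fun z => h.b.repr z (SVIdx.N (m + 2))) E
    simp [Finsupp.single_apply, hS2] at E2
    exact E2
  have hT : ∀ m : ℤ, T m = T 0 := by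
    have key : ∀ m : ℤ, T m = T 2 := by
      intro m
      have E := ENN m
      rw [hNw m, hNw 2] at E
      simp only [add_lie, lie_add, smul_lie, lie_smul, h.LN, extSV_MN, h.NN, extSV_NL, h.NM,
        lie_zero, smul_zero, zero_add, add_zero, smul_smul] at E
      have E2 := congrArg (fun z => h.b.repr z (SVIdx.M (m + 2))) E
      simp [Finsupp.single_apply] at E2
      linear_combination E2 / 2
    intro m
    rw [key m, ← key 0]
  -- Step 4: from [L_m, N_0] we get B m = 0.
  have hB : ∀ m : ℤ, B m = 0 := by
    intro m
    have E := D.apply_lie_eq_add (h.b (SVIdx.L m)) (h.b (SVIdx.N 0))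
    rw [h.LN m 0] at E
    rw [map_smul, hLw m, hNw 0] at E
    simp only [add_lie, lie_add, smul_lie, lie_smul, h.LL, h.LM, h.LN, extSV_MN, h.NN, lie_zero,
      smul_zero, zero_add, add_zero, smul_smul, smul_add, hS, zero_smul, zero_mul, mul_zero,
      Int.cast_zero] at E
    have E2 := congrArg (fun z => h.b.repr z (SVIdx.M (m + 0))) E
    simp [Finsupp.single_apply] at E2
    exact E2
  -- Step 5: from [N_m, Y_n] we get W (m+n) = U m + W n.
  have E5 : ∀ m n : ℤ, W (m + n) = U m + W n := by
    intro m n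
    have E := D.apply_lie_eq_add (h.b (SVIdx.N m)) (h.b (SVIdx.Y n))
    rw [h.NY m n, hYw (m + n), hNw m, hYw n] at E
    simp only [add_lie, smul_lie, lie_smul, h.LY, h.NY, extSV_YM, h.MY, smul_zero, zero_add,
      add_zero, smul_smul, hS, zero_smul, zero_mul] at E
    have E2 := congrArg (fun z => h.b.repr z (SVIdx.Y (m + n))) E
    simp [Finsupp.single_apply] at E2
    linear_combination E2
  -- Step 6: from [L_m, Y_n] we get U = A and G = 0.
  have E6 : ∀ m n : ℤ, ((n : ℂ) + (1 - (m : ℂ)) / 2) * W (m + n) =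
      A m * ((n : ℂ) + (1 - (m : ℂ)) / 2) + G m + W n * ((n : ℂ) + (1 - (m : ℂ)) / 2) := by
    intro m n
    have E := D.apply_lie_eq_add (h.b (SVIdx.L m)) (h.b (SVIdx.Y n))
    rw [h.LY m n] at E
    rw [map_smul, hYw (m + n), hLw m, hYw n] at E
    simp only [add_lie, smul_lie, lie_smul, h.LY, h.NY, h.MY, smul_zero, zero_add, add_zero,
      smul_smul] at E
    have E2 := congrArg (fun z => h.b.repr z (SVIdx.Y (m + n))) E
    simp [Finsupp.single_apply] at E2
    linear_combination E2
  have hUA : ∀ m : ℤ, U m = A m := by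
    intro m
    have e0 := E6 m 0
    have e1 := E6 m 1
    have w0 := E5 m 0
    have w1 := E5 m 1
    push_cast at e0 e1
    linear_combination e1 - e0 - ((1 : ℂ) + (1 - (m : ℂ)) / 2) * w1 + ((1 - (m : ℂ)) / 2) * w0
  have hG : ∀ m : ℤ, G m = 0 := by
    intro m
    have e0 := E6 m 0
    have w0 := E5 m 0
    push_cast at e0
    linear_combination -e0 + ((1 - (m : ℂ)) / 2) * w0 + ((1 - (m : ℂ)) / 2) * hUA m
  -- Step 7: A is additive, hence A m = m * A 1.
  have hWv : ∀ m : ℤ, W m = A m + W 0 := by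
    intro m
    have := E5 m 0
    rw [add_zero, hUA m] at this
    exact this
  have hAadd : ∀ m n : ℤ, A (m + n) = A m + A n := by
    intro m n
    have e := E5 m n
    rw [hUA m, hWv (m + n), hWv n] at e
    linear_combination e
  have hA0 : A 0 = 0 := by
    have := hAadd 0 0
    rw [add_zero] at this
    linear_combination -this
  have hA : ∀ m : ℤ, A m = (m : ℂ) * A 1 := by
    intro m
    induction m using Int.induction_on with
    | zero => simpa using hA0
    | succ k ih =>
      have h2 := hAadd k 1
      push_cast at ih ⊢
      linear_combination h2 + ih
    | pred k ih =>
      have h2 := hAadd (-(k : ℤ)) (-1)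
      have h3 := hAadd 1 (-1)
      rw [show -(k : ℤ) + -1 = -(k : ℤ) - 1 by ring] at h2
      rw [show (1 : ℤ) + -1 = 0 by ring] at h3
      push_cast at ih ⊢
      linear_combination h2 + ih - h3 + hA0
  -- Step 8: from [N_m, M_0] we get Q m = U m + Q 0.
  have E8 : ∀ m : ℤ, Q m = U m + Q 0 := by
    intro m
    have E := D.apply_lie_eq_add (h.b (SVIdx.N m)) (h.b (SVIdx.M 0))
    rw [h.NM m 0] at E
    rw [map_smul, hMw (m + 0), hMw 0, hNw m] at E
    simp only [add_lie, lie_add, smul_lie, lie_smul, h.LM, h.NM, h.MM, extSV_ML, extSV_MN,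
      lie_zero, smul_zero, zero_add, add_zero, smul_smul, smul_add, hS, hP, hR, zero_smul,
      zero_mul, mul_zero, Int.cast_zero, add_zero] at E
    have E2 := congrArg (fun z => h.b.repr z (SVIdx.M (m + 0))) E
    simp [Finsupp.single_apply] at E2
    linear_combination E2 / 2
  -- Step 9: from [Y_1, Y_{-1}] we get Q 1 = W 1 + W (-1).
  have E9 : Q 1 = W 1 + W (-1) := by
    have E := D.apply_lie_eq_add (h.b (SVIdx.Y 1)) (h.b (SVIdx.Y (-1)))
    rw [h.YY 1 (-1)] at E
    rw [map_smul] at E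
    rw [show (1 : ℤ) + -1 + 1 = 1 by ring] at E
    rw [hMw 1, hYw 1, hYw (-1)] at E
    simp only [smul_lie, lie_smul, h.YY, smul_smul, smul_add, hP, hR, zero_smul, add_zero,
      zero_add] at E
    rw [show (1 : ℤ) + -1 + 1 = 1 by ring] at E
    have E2 := congrArg (fun z => h.b.repr z (SVIdx.M (1 : ℤ))) E
    norm_num [Finsupp.single_apply] at E2
    linear_combination E2 / 2
  -- Assemble the values.
  set a := A 1 with ha
  set bb := W 0 with hbb
  set c := T 0 with hc
  have hQ : ∀ m : ℤ, Q m = 2 * bb - a + (m : ℂ) * a := by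
    intro m
    have q0 : Q 0 = 2 * bb - a := by
      have e1 := E8 1
      have w1 := hWv 1
      have wm1 := hWv (-1)
      rw [hUA 1] at e1
      rw [hA 1] at w1
      rw [hA (-1)] at wm1
      push_cast at w1 wm1
      linear_combination E9 - e1 + w1 + wm1
    rw [E8 m, hUA m, hA m, q0]
    ring
  have HL : ∀ m : ℤ, D (h.b (SVIdx.L m)) = ((m : ℂ) * a) • h.b (SVIdx.L m) := by
    intro m
    rw [hLw m, hB m, hG m, hA m, zero_smul, zero_smul, add_zero, add_zero]
  have HM : ∀ m : ℤ, D (h.b (SVIdx.M m)) = (2 * bb - a + (m : ℂ) * a) • h.b (SVIdx.M m) := by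
    intro m
    rw [hMw m, hP m, hR m, hQ m, zero_smul, zero_smul, add_zero, zero_add]
  have HN : ∀ m : ℤ, D (h.b (SVIdx.N m)) = c • h.b (SVIdx.M m) + ((m : ℂ) * a) • h.b (SVIdx.N m) := by
    intro m
    rw [hNw m, hS m, hT m, hUA m, hA m, zero_smul, zero_add]
  have HY : ∀ m : ℤ, D (h.b (SVIdx.Y m)) = (bb + (m : ℂ) * a) • h.b (SVIdx.Y m) := by
    intro m
    rw [hYw m, hWv m, hA m, add_comm]
  refine ⟨a, bb, c, HL, HM, HN, HY, ?_⟩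
  have hx : (D : g →ₗ[ℂ] g) = LieAlgebra.ad ℂ g
      (a • h.b (SVIdx.L 0) - (c / 2) • h.b (SVIdx.M 0) + (bb - a / 2) • h.b (SVIdx.N 0)) := by
    apply h.b.ext
    intro i
    rw [LieAlgebra.ad_apply, LieDerivation.coeFn_coe]
    cases i with
    | L m =>
      rw [HL m]
      simp only [add_lie, sub_lie, smul_lie, h.LL, extSV_ML, extSV_NL, zero_add, smul_smul]
      push_cast
      module
    | M m =>
      rw [HM m]
      simp only [add_lie, sub_lie, smul_lie, h.LM, h.MM, h.NM, zero_add, smul_smul, smul_zero]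
      module
    | N m =>
      rw [HN m]
      simp only [add_lie, sub_lie, smul_lie, h.LN, extSV_MN, h.NN, zero_add, smul_smul, smul_zero]
      module
    | Y m =>
      rw [HY m]
      simp only [add_lie, sub_lie, smul_lie, h.LY, h.MY, h.NY, zero_add, smul_smul, smul_zero]
      push_cast
      module
  intro x
  have := LinearMap.congr_fun hx x
  rw [LieAlgebra.ad_apply] at this
  simpa using this
end

section
/- If φ is a 2-cocycle on sv~, then for all m, n ∈ ℤ with m + n ≠ 0, one has φ(L_m, M_n) = (n/(m+n)) φ(L_0, M_{m+n}). -/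
/-- For a 2-cocycle `φ` on `sv~`: `φ(L_m, M_n) = (n/(m+n)) φ(L_0, M_{m+n})` when `m+n ≠ 0`. -/
theorem extSV_cocycle_LM {g : Type*} [LieRing g] [LieAlgebra ℂ g] (h : ExtSV g)
    (φ : g →ₗ[ℂ] g →ₗ[ℂ] ℂ)
    (hskew : ∀ x y : g, φ x y = - φ y x)
    (hcoc : ∀ x y z : g, φ ⁅x, y⁆ z + φ ⁅y, z⁆ x + φ ⁅z, x⁆ y = 0) :
    ∀ m n : ℤ, m + n ≠ 0 →
      φ (h.b (SVIdx.L m)) (h.b (SVIdx.M n)) =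
        ((n : ℂ) / ((m : ℂ) + (n : ℂ))) * φ (h.b (SVIdx.L 0)) (h.b (SVIdx.M (m + n))) := by
  intro m n hmn
  have hc : ((m : ℂ) + (n : ℂ)) ≠ 0 := by
    have : ((m + n : ℤ) : ℂ) ≠ 0 := Int.cast_ne_zero.mpr hmn
    push_cast at this; exact this
  have H := hcoc (h.b (SVIdx.L 0)) (h.b (SVIdx.L m)) (h.b (SVIdx.M n))
  rw [h.LL 0 m, h.LM m n, ← lie_skew (h.b (SVIdx.M n)) (h.b (SVIdx.L 0)), h.LM 0 n] at H
  simp only [map_smul, map_neg, LinearMap.smul_apply, LinearMap.neg_apply, smul_eq_mul,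
    Int.cast_zero, sub_zero, zero_add] at H
  rw [hskew (h.b (SVIdx.M (m + n))) (h.b (SVIdx.L 0)),
    hskew (h.b (SVIdx.L m)) (h.b (SVIdx.M n))] at H
  rw [hskew (h.b (SVIdx.L m)) (h.b (SVIdx.M n))]
  field_simp
  linear_combination H
end

section
/- If φ is a 2-cocycle on sv~, then φ(Y_{m+1/2}, Y_{−m−1/2}) = (m + 1/2) φ(N_0, M_0) for all m ∈ ℤ. -/
/-- For a 2-cocycle `φ` on `sv~`: `φ(Y_{m+1/2}, Y_{-m-1/2}) = (m + 1/2) φ(N_0, M_0)`. -/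
theorem extSV_cocycle_YY {g : Type*} [LieRing g] [LieAlgebra ℂ g] (h : ExtSV g)
    (φ : g →ₗ[ℂ] g →ₗ[ℂ] ℂ)
    (hskew : ∀ x y : g, φ x y = - φ y x)
    (hcoc : ∀ x y z : g, φ ⁅x, y⁆ z + φ ⁅y, z⁆ x + φ ⁅z, x⁆ y = 0) :
    ∀ m : ℤ, φ (h.b (SVIdx.Y m)) (h.b (SVIdx.Y (-m - 1))) =
      ((m : ℂ) + 1 / 2) * φ (h.b (SVIdx.N 0)) (h.b (SVIdx.M 0)) := by
  intro m
  have h1 := hcoc (h.b (SVIdx.N 0)) (h.b (SVIdx.Y m)) (h.b (SVIdx.Y (-m - 1)))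
  have hYN : ⁅h.b (SVIdx.Y (-m - 1)), h.b (SVIdx.N 0)⁆ = -(h.b (SVIdx.Y (-m - 1))) := by
    rw [← lie_skew, h.NY]
    norm_num
  have e1 : (0 : ℤ) + m = m := by ring
  have e2 : m + (-m - 1) + 1 = 0 := by ring
  rw [h.NY, h.YY, hYN, e1, e2] at h1
  simp only [map_smul, map_neg, LinearMap.smul_apply, LinearMap.neg_apply, smul_eq_mul] at h1
  have hs1 := hskew (h.b (SVIdx.Y (-m - 1))) (h.b (SVIdx.Y m))
  have hs2 := hskew (h.b (SVIdx.M 0)) (h.b (SVIdx.N 0))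
  push_cast at h1
  linear_combination h1 / 2 + hs1 / 2 - ((m : ℂ) + 1 / 2) * hs2
end

section
/- If φ is a 2-cocycle on sv~, then φ(M_p, M_q) = 0 for all p, q ∈ ℤ. -/
/-- For a 2-cocycle `φ` on `sv~`: `φ(M_p, M_q) = 0` for all `p, q`. -/
theorem extSV_cocycle_MM {g : Type*} [LieRing g] [LieAlgebra ℂ g] (h : ExtSV g)
    (φ : g →ₗ[ℂ] g →ₗ[ℂ] ℂ)
    (hskew : ∀ x y : g, φ x y = - φ y x)
    (hcoc : ∀ x y z : g, φ ⁅x, y⁆ z + φ ⁅y, z⁆ x + φ ⁅z, x⁆ y = 0) :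
    ∀ p q : ℤ, φ (h.b (SVIdx.M p)) (h.b (SVIdx.M q)) = 0 := by
  intro p q
  have key := hcoc (h.b (SVIdx.N 0)) (h.b (SVIdx.M p)) (h.b (SVIdx.M q))
  rw [h.NM, h.MM, ← lie_skew, h.NM] at key
  simp only [zero_add, map_zero, LinearMap.zero_apply, map_neg, map_smul, LinearMap.neg_apply,
    LinearMap.smul_apply, smul_eq_mul] at key
  rw [hskew (h.b (SVIdx.M q)) (h.b (SVIdx.M p))] at key
  linear_combination key / 4
end

section
/- If φ is a 2-cocycle on sv~, then φ(M_{−p}, N_p) = 2 φ(L_1, M_{−1}) for all p ∈ ℤ. -/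
/-- For a 2-cocycle `φ` on `sv~`: `φ(M_{-p}, N_p) = 2 φ(L_1, M_{-1})` for all `p`. -/
theorem extSV_cocycle_MN {g : Type*} [LieRing g] [LieAlgebra ℂ g] (h : ExtSV g)
    (φ : g →ₗ[ℂ] g →ₗ[ℂ] ℂ)
    (hskew : ∀ x y : g, φ x y = - φ y x)
    (hcoc : ∀ x y z : g, φ ⁅x, y⁆ z + φ ⁅y, z⁆ x + φ ⁅z, x⁆ y = 0) :
    ∀ p : ℤ, φ (h.b (SVIdx.M (-p))) (h.b (SVIdx.N p)) =
      2 * φ (h.b (SVIdx.L 1)) (h.b (SVIdx.M (-1))) := by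
  intro p
  -- Cocycle instance (N_p, N_0, M_{-p}): gives φ(M_{-p},N_p) = φ(M_0,N_0)
  have h1 := hcoc (h.b (SVIdx.N p)) (h.b (SVIdx.N 0)) (h.b (SVIdx.M (-p)))
  have e1 : ⁅h.b (SVIdx.N p), h.b (SVIdx.N 0)⁆ = 0 := h.NN p 0
  have e2 : ⁅h.b (SVIdx.N 0), h.b (SVIdx.M (-p))⁆ = (2 : ℂ) • h.b (SVIdx.M (-p)) := by
    rw [h.NM]; norm_num
  have e3 : ⁅h.b (SVIdx.M (-p)), h.b (SVIdx.N p)⁆ = -((2 : ℂ) • h.b (SVIdx.M 0)) := by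
    rw [← lie_skew, h.NM]; norm_num
  rw [e1, e2, e3] at h1
  simp only [map_zero, LinearMap.zero_apply, map_smul, map_neg, LinearMap.neg_apply,
    LinearMap.smul_apply, smul_eq_mul] at h1
  -- Cocycle instance (L_1, M_{-1}, N_0): gives φ(M_0,N_0) = 2 φ(L_1,M_{-1})
  have h2 := hcoc (h.b (SVIdx.L 1)) (h.b (SVIdx.M (-1))) (h.b (SVIdx.N 0))
  have f1 : ⁅h.b (SVIdx.L 1), h.b (SVIdx.M (-1))⁆ = -((1 : ℂ) • h.b (SVIdx.M 0)) := by
    rw [h.LM]; norm_num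
  have f2 : ⁅h.b (SVIdx.M (-1)), h.b (SVIdx.N 0)⁆ = -((2 : ℂ) • h.b (SVIdx.M (-1))) := by
    rw [← lie_skew, h.NM]; norm_num
  have f3 : ⁅h.b (SVIdx.N 0), h.b (SVIdx.L 1)⁆ = 0 := by
    rw [← lie_skew, h.LN]; norm_num
  rw [f1, f2, f3] at h2
  simp only [map_zero, LinearMap.zero_apply, map_smul, map_neg, LinearMap.neg_apply,
    LinearMap.smul_apply, smul_eq_mul] at h2
  have hs := hskew (h.b (SVIdx.M (-1))) (h.b (SVIdx.L 1))
  linear_combination (1/2 : ℂ) * h1 - h2 - 2 * hs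
end

section
/- Suppose c: ℤ → ℂ satisfies c(0)=c(1)=0 and (n−m)c(m+n)+(m+n)c(m)=(m+n)c(n) for all m,n ∈ ℤ. Then there exists β ∈ ℂ such that c(m) = β(m² − m) for all m ∈ ℤ. -/
/-- The functional equation for the cocycle values `c(m) = φ(L_m, N_{-m})` forces
`c(m) = β (m² - m)` for some `β ∈ ℂ`. -/
theorem cocycle_LN_functional_equation (c : ℤ → ℂ) (h0 : c 0 = 0) (h1 : c 1 = 0)
    (heq : ∀ m n : ℤ, ((n : ℂ) - m) * c (m + n) + ((m : ℂ) + n) * c m = ((m : ℂ) + n) * c n) :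
    ∃ β : ℂ, ∀ m : ℤ, c m = β * ((m : ℂ) ^ 2 - m) := by
  have key : ∀ m : ℤ, 2 * c m = c 2 * ((m : ℂ) ^ 2 - m) := by
    intro m
    induction m using Int.induction_on with
    | zero => rw [h0]; push_cast; ring
    | succ i ih =>
      have h := heq i 1
      push_cast at h ih ⊢
      rcases eq_or_ne (i : ℂ) 1 with hi | hi
      · rw [hi] at ih ⊢
        -- i = 1 (as complex; in fact i = 1), goal: 2 * c (i+1) = c 2 * 2
        have : (i : ℤ) = 1 := by exact_mod_cast hi
        rw [this]; ring
      · have hne : (1 : ℂ) - i ≠ 0 := by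
          intro hh; apply hi; linear_combination -hh
        have key2 : ((1 : ℂ) - i) * (2 * c (i + 1) - c 2 * ((i + 1) ^ 2 - (i + 1))) = 0 := by
          linear_combination 2 * h - ((i : ℂ) + 1) * ih + 2 * ((i : ℂ) + 1) * h1
        rcases mul_eq_zero.mp key2 with h' | h'
        · exact absurd h' hne
        · linear_combination h'
    | pred i ih =>
      rcases Nat.eq_zero_or_pos i with hi0 | hipos
      · subst hi0
        have h := heq (-1) 2
        push_cast at h ⊢
        -- h : (2 + 1) * c 1 + (-1 + 2) * c (-1 + 2)?? careful
        -- heq (-1) 2 : (2 - (-1)) * c (-1 + 2) + (-1 + 2) * c (-1) = (-1 + 2) * c 2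
        norm_num at h
        -- goal : 2 * c (-1) = c 2 * ((-1)^2 - (-1))
        linear_combination 2 * h - 6 * h1
      · have h := heq (-(i : ℤ) - 1) 1
        have hmi : (-(i : ℤ) - 1) + 1 = -(i : ℤ) := by ring
        rw [hmi] at h
        push_cast at h ih ⊢
        have hne : (i : ℂ) ≠ 0 := by
          exact_mod_cast Nat.cast_ne_zero.mpr hipos.ne'
        have key2 : (i : ℂ) * (2 * c (-(i : ℤ) - 1) - c 2 * ((-(i : ℂ) - 1) ^ 2 - (-(i : ℂ) - 1))) = 0 := by
          linear_combination -2 * h + ((i : ℂ) + 2) * ih + 2 * (i : ℂ) * h1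
        rcases mul_eq_zero.mp key2 with h' | h'
        · exact absurd h' hne
        · linear_combination h'
  refine ⟨c 2 / 2, fun m => ?_⟩
  have := key m
  field_simp
  linear_combination this
end

section
/- The second cohomology group H²(sv~, ℂ) of the extended Schrödinger-Virasoro algebra has dimension 3, spanned by the classes of the cocycles φ₁(L_m,L_n)=δ_{m+n,0}(m³−m)/12, φ₂(L_m,N_n)=δ_{m+n,0}(m²−m), φ₃(N_m,N_n)=δ_{m+n,0}n (all other pairs of basis vectors mapped to 0). -/
variable (g : Type*) [LieRing g] [LieAlgebra ℂ g]

/-- The space of 2-cocycles on a complex Lie algebra `g`. -/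
noncomputable def twoCocycles : Submodule ℂ (g →ₗ[ℂ] g →ₗ[ℂ] ℂ) where
  carrier := {φ | (∀ x y : g, φ x y = - φ y x) ∧
    (∀ x y z : g, φ ⁅x, y⁆ z + φ ⁅y, z⁆ x + φ ⁅z, x⁆ y = 0)}
  add_mem' := by
    rintro φ ψ ⟨h1, h2⟩ ⟨k1, k2⟩
    refine ⟨fun x y => ?_, fun x y z => ?_⟩
    · simp only [LinearMap.add_apply]
      rw [h1 x y, k1 x y]; ring
    · simp only [LinearMap.add_apply]
      linear_combination h2 x y z + k2 x y z
  zero_mem' := by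
    refine ⟨fun x y => ?_, fun x y z => ?_⟩ <;> simp
  smul_mem' := by
    rintro c φ ⟨h1, h2⟩
    refine ⟨fun x y => ?_, fun x y z => ?_⟩
    · simp only [LinearMap.smul_apply, smul_eq_mul]
      rw [h1 x y]; ring
    · simp only [LinearMap.smul_apply, smul_eq_mul]
      linear_combination c * h2 x y z

/-- The space of 2-coboundaries on a complex Lie algebra `g`. -/
noncomputable def twoCoboundaries : Submodule ℂ (g →ₗ[ℂ] g →ₗ[ℂ] ℂ) where
  carrier := {φ | ∃ f : g →ₗ[ℂ] ℂ, ∀ x y : g, φ x y = f ⁅x, y⁆}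
  add_mem' := by
    rintro φ ψ ⟨f, hf⟩ ⟨f', hf'⟩
    exact ⟨f + f', fun x y => by simp [hf x y, hf' x y]⟩
  zero_mem' := ⟨0, fun x y => by simp⟩
  smul_mem' := by
    rintro c φ ⟨f, hf⟩
    exact ⟨c • f, fun x y => by simp [hf x y]⟩

/-- Structure constants of the cocycle `φ₁(L_m, L_n) = δ_{m+n,0} (m³-m)/12`. -/
noncomputable def c1 : SVIdx → SVIdx → ℂ
  | SVIdx.L m, SVIdx.L n => if m + n = 0 then ((m : ℂ) ^ 3 - m) / 12 else 0
  | _, _ => 0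

/-- Structure constants of the cocycle `φ₂(L_m, N_n) = δ_{m+n,0} (m²-m)`,
extended by skew-symmetry. -/
noncomputable def c2 : SVIdx → SVIdx → ℂ
  | SVIdx.L m, SVIdx.N n => if m + n = 0 then (m : ℂ) ^ 2 - m else 0
  | SVIdx.N n, SVIdx.L m => if m + n = 0 then -((m : ℂ) ^ 2 - m) else 0
  | _, _ => 0

/-- Structure constants of the cocycle `φ₃(N_m, N_n) = δ_{m+n,0} n`. -/
noncomputable def c3 : SVIdx → SVIdx → ℂ
  | SVIdx.N m, SVIdx.N n => if m + n = 0 then (n : ℂ) else 0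
  | _, _ => 0

variable {g}

/-- The bilinear form on `g` obtained by extending structure constants
`c : SVIdx → SVIdx → ℂ` along the basis of `sv~`. -/
noncomputable def ExtSV.mkForm (h : ExtSV g) (c : SVIdx → SVIdx → ℂ) : g →ₗ[ℂ] g →ₗ[ℂ] ℂ :=
  h.b.constr ℂ fun i => h.b.constr ℂ fun j => c i j


open SVIdx in
/-- Bracket structure coefficient. -/
noncomputable def brC : SVIdx → SVIdx → ℂ
  | L m, L n => (n : ℂ) - m
  | L _, M n => (n : ℂ)
  | M n, L _ => -(n : ℂ)
  | L m, Y n => (n : ℂ) + (1 - (m : ℂ)) / 2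
  | Y n, L m => -((n : ℂ) + (1 - (m : ℂ)) / 2)
  | L _, N n => (n : ℂ)
  | N n, L _ => -(n : ℂ)
  | M _, M _ => 0
  | M _, N _ => -2
  | N _, M _ => 2
  | M _, Y _ => 0
  | Y _, M _ => 0
  | N _, N _ => 0
  | N _, Y _ => 1
  | Y _, N _ => -1
  | Y m, Y n => (m : ℂ) - n

open SVIdx in
/-- Bracket target index. -/
def brI : SVIdx → SVIdx → SVIdx
  | L m, L n => L (m + n)
  | L m, M n => M (m + n)
  | M n, L m => M (m + n)
  | L m, Y n => Y (m + n)
  | Y n, L m => Y (m + n)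
  | L m, N n => N (m + n)
  | N n, L m => N (m + n)
  | M _, M _ => L 0
  | M n, N m => M (m + n)
  | N m, M n => M (m + n)
  | M _, Y _ => L 0
  | Y _, M _ => L 0
  | N _, N _ => L 0
  | N m, Y n => Y (m + n)
  | Y n, N m => Y (m + n)
  | Y m, Y n => M (m + n + 1)

lemma ExtSV.brkt (h : ExtSV g) (i j : SVIdx) :
    ⁅h.b i, h.b j⁆ = brC i j • h.b (brI i j) := by
  have sk : ∀ x y : g, ⁅x, y⁆ = -⁅y, x⁆ := fun x y => (lie_skew x y).symm
  cases i with
  | L m => cases j with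
    | L n => simpa [brC, brI] using h.LL m n
    | M n => simpa [brC, brI] using h.LM m n
    | N n => simpa [brC, brI] using h.LN m n
    | Y n => simpa [brC, brI] using h.LY m n
  | M m => cases j with
    | L n => rw [sk]; simp [brC, brI, h.LM, add_comm]
    | M n => simpa [brC, brI] using h.MM m n
    | N n => rw [sk]; simp [brC, brI, h.NM, add_comm]
    | Y n => simpa [brC, brI] using h.MY m n
  | N m => cases j with
    | L n => rw [sk]; simp [brC, brI, h.LN, add_comm]
    | M n => simpa [brC, brI] using h.NM m n
    | N n => simpa [brC, brI] using h.NN m n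
    | Y n => simpa [brC, brI] using h.NY m n
  | Y m => cases j with
    | L n => rw [sk, h.LY n m, ← neg_smul]; simp [brC, brI, add_comm]
    | M n => rw [sk]; simp [brC, brI, h.MY]
    | N n => rw [sk]; simp [brC, brI, h.NY, add_comm]
    | Y n => simpa [brC, brI] using h.YY m n

lemma ExtSV.mkForm_apply (h : ExtSV g) (c : SVIdx → SVIdx → ℂ) (i j : SVIdx) :
    h.mkForm c (h.b i) (h.b j) = c i j := by
  simp [ExtSV.mkForm, Module.Basis.constr_basis]

/-- The bracket of `g` as a bilinear map. -/
noncomputable def brkt2 : g →ₗ[ℂ] g →ₗ[ℂ] g :=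
  LinearMap.mk₂ ℂ (fun x y : g => ⁅x, y⁆) add_lie smul_lie lie_add lie_smul

@[simp] lemma brkt2_apply (x y : g) : brkt2 x y = ⁅x, y⁆ := rfl

/-- The Jacobi trilinear form attached to a bilinear form. -/
noncomputable def jacT (φ : g →ₗ[ℂ] g →ₗ[ℂ] ℂ) : g →ₗ[ℂ] g →ₗ[ℂ] g →ₗ[ℂ] ℂ :=
  let J1 : g →ₗ[ℂ] g →ₗ[ℂ] g →ₗ[ℂ] ℂ := (brkt2 (g := g)).compr₂ φ
  let cyc : (g →ₗ[ℂ] g →ₗ[ℂ] g →ₗ[ℂ] ℂ) → (g →ₗ[ℂ] g →ₗ[ℂ] g →ₗ[ℂ] ℂ) :=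
    fun A => ((LinearMap.lflip (R₀ := ℂ)).toLinearMap ∘ₗ A).flip
  J1 + cyc J1 + cyc (cyc J1)

lemma jacT_apply (φ : g →ₗ[ℂ] g →ₗ[ℂ] ℂ) (x y z : g) :
    jacT φ x y z = φ ⁅x, y⁆ z + φ ⁅y, z⁆ x + φ ⁅z, x⁆ y := by
  simp [jacT, LinearMap.compr₂_apply, LinearMap.flip_apply, LinearMap.lflip_apply]

lemma mem_twoCocycles_of_basis (h : ExtSV g) (φ : g →ₗ[ℂ] g →ₗ[ℂ] ℂ)
    (hskew : ∀ i j, φ (h.b i) (h.b j) = - φ (h.b j) (h.b i))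
    (hjac : ∀ i j k, brC i j * φ (h.b (brI i j)) (h.b k)
      + brC j k * φ (h.b (brI j k)) (h.b i)
      + brC k i * φ (h.b (brI k i)) (h.b j) = 0) :
    φ ∈ twoCocycles g := by
  constructor
  · have e : φ + φ.flip = 0 := by
      apply h.b.ext; intro i
      apply h.b.ext; intro j
      simp [hskew i j]
    intro x y
    have := LinearMap.congr_fun (LinearMap.congr_fun e x) y
    simp only [LinearMap.add_apply, LinearMap.flip_apply, LinearMap.zero_apply] at this
    linear_combination this
  · have e : jacT φ = 0 := by
      apply h.b.ext; intro i
      apply h.b.ext; intro j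
      apply h.b.ext; intro k
      have := hjac i j k
      rw [jacT_apply, h.brkt i j, h.brkt j k, h.brkt k i]
      simpa [map_smul] using this
    intro x y z
    have := LinearMap.congr_fun (LinearMap.congr_fun (LinearMap.congr_fun e x) y) z
    rw [jacT_apply] at this
    simpa using this

/-- Doubled degree of a basis index. -/
def dg2 : SVIdx → ℤ
  | SVIdx.L k => 2*k
  | SVIdx.M k => 2*k
  | SVIdx.N k => 2*k
  | SVIdx.Y k => 2*k + 1

lemma brI_L0_left (i : SVIdx) : brI (SVIdx.L 0) i = i := by
  cases i <;> simp [brI]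

lemma brI_L0_right (i : SVIdx) : brI i (SVIdx.L 0) = i := by
  cases i <;> simp [brI]

lemma brC_L0_left (i : SVIdx) : brC (SVIdx.L 0) i = (dg2 i : ℂ)/2 := by
  cases i <;> simp [brC, dg2] <;> (push_cast; ring)

lemma brC_L0_right (i : SVIdx) : brC i (SVIdx.L 0) = -(dg2 i : ℂ)/2 := by
  cases i <;> simp [brC, dg2] <;> (push_cast; ring)

section abstractD
variable (d : SVIdx → SVIdx → ℂ)
    (hd : ∀ i j, d i j = - d j i)
    (hj : ∀ i j k, brC i j * d (brI i j) k + brC j k * d (brI j k) i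
      + brC k i * d (brI k i) j = 0)

include hd hj in
lemma keyL0 (i j : SVIdx) :
    ((dg2 i + dg2 j : ℤ) : ℂ) * d i j = 2 * brC i j * d (SVIdx.L 0) (brI i j) := by
  have H := hj (SVIdx.L 0) i j
  rw [brI_L0_left, brI_L0_right, brC_L0_left, brC_L0_right] at H
  have sk1 := hd (brI i j) (SVIdx.L 0)
  have sk2 := hd j i
  push_cast
  linear_combination 2*H - 2*(brC i j)*sk1 + ((dg2 j : ℂ))*sk2

end abstractD

section abstractD2
variable (d : SVIdx → SVIdx → ℂ)
    (hd : ∀ i j, d i j = - d j i)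
    (hj : ∀ i j k, brC i j * d (brI i j) k + brC j k * d (brI j k) i
      + brC k i * d (brI k i) j = 0)

include hd hj in
lemma hNM (m : ℤ) : d (SVIdx.N m) (SVIdx.M (-m)) = d (SVIdx.N 0) (SVIdx.M 0) := by
  have H := hj (SVIdx.N m) (SVIdx.N 0) (SVIdx.M (-m))
  simp only [brC, brI] at H
  rw [show (0 : ℤ) + -m = -m by ring, show m + -m = 0 by ring] at H
  have s1 := hd (SVIdx.M (-m)) (SVIdx.N m)
  have s2 := hd (SVIdx.M 0) (SVIdx.N 0)
  linear_combination -H/2 + s1 - s2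

include hd hj in
lemma hLM (n : ℤ) : d (SVIdx.L n) (SVIdx.M (-n)) = -(n : ℂ) * d (SVIdx.N 0) (SVIdx.M 0) / 2 := by
  have H := hj (SVIdx.L n) (SVIdx.N 0) (SVIdx.M (-n))
  simp only [brC, brI] at H
  rw [show (0:ℤ) + -n = -n by ring, show n + -n = 0 by ring] at H
  have s1 := hd (SVIdx.M (-n)) (SVIdx.L n)
  have s2 := hd (SVIdx.M 0) (SVIdx.N 0)
  push_cast at H ⊢
  linear_combination -H/2 + s1 + (n:ℂ)/2 * s2
include hd hj in
lemma hNN (m : ℤ) : d (SVIdx.N m) (SVIdx.N (-m)) = (m : ℂ) * d (SVIdx.N 1) (SVIdx.N (-1)) := by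
  have H := hj (SVIdx.L (m-1)) (SVIdx.N 1) (SVIdx.N (-m))
  simp only [brC, brI] at H
  rw [show m - 1 + 1 = m by ring, show m - 1 + -m = -1 by ring] at H
  have s1 := hd (SVIdx.N (-1)) (SVIdx.N 1)
  push_cast at H ⊢
  linear_combination H - (m:ℂ) * s1
include hd hj in
lemma hMM (m : ℤ) : d (SVIdx.M m) (SVIdx.M (-m)) = 0 := by
  have h1 : d (SVIdx.M 1) (SVIdx.M (-1)) = 0 := by
    have H := hj (SVIdx.Y 1) (SVIdx.Y (-1)) (SVIdx.M (-1))
    simp only [brC, brI] at H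
    norm_num at H
    linear_combination H
  have H := hj (SVIdx.L (m-1)) (SVIdx.M 1) (SVIdx.M (-m))
  simp only [brC, brI] at H
  rw [show m - 1 + 1 = m by ring, show m - 1 + -m = -1 by ring] at H
  have s1 := hd (SVIdx.M (-1)) (SVIdx.M 1)
  push_cast at H ⊢
  linear_combination H - (m:ℂ) * s1 + (m:ℂ) * h1
include hd hj in
lemma hYY (m : ℤ) : d (SVIdx.Y m) (SVIdx.Y (-1-m)) = ((2*m+1 : ℤ) : ℂ) * d (SVIdx.N 0) (SVIdx.M 0) / 2 := by
  have H := hj (SVIdx.N 0) (SVIdx.Y m) (SVIdx.Y (-1-m))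
  simp only [brC, brI] at H
  rw [show (0:ℤ) + m = m by ring, show m + (-1-m) + 1 = 0 by ring,
    show (0:ℤ) + (-1-m) = -1-m by ring] at H
  have s1 := hd (SVIdx.Y (-1-m)) (SVIdx.Y m)
  have s2 := hd (SVIdx.M 0) (SVIdx.N 0)
  push_cast at H ⊢
  linear_combination (H + s1)/2 - ((2*(m:ℂ)+1)/2) * s2
end abstractD2

section abstractD3
open SVIdx
variable (d : SVIdx → SVIdx → ℂ)
    (hd : ∀ i j, d i j = - d j i)
    (hj : ∀ i j k, brC i j * d (brI i j) k + brC j k * d (brI j k) i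
      + brC k i * d (brI k i) j = 0)

include hd hj in
lemma Rrec (m n : ℤ) :
    ((n:ℂ)-m) * d (L (m+n)) (L (-(m+n))) + ((m:ℂ)+2*n) * d (L m) (L (-m))
      - (2*(m:ℂ)+n) * d (L n) (L (-n)) = 0 := by
  have H := hj (L m) (L n) (L (-(m+n)))
  simp only [brC, brI] at H
  rw [show n + -(m+n) = -m by ring, show -(m+n) + m = -n by ring] at H
  have s1 := hd (L (-m)) (L m)
  have s2 := hd (L (-n)) (L n)
  push_cast at H ⊢
  linear_combination H + ((m:ℂ)+2*n)*s1 - (2*(m:ℂ)+n)*s2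

include hd hj in
lemma hLL (m : ℤ) : d (L m) (L (-m)) =
    d (L 1) (L (-1)) * m
      + (d (L 2) (L (-2)) - 2 * d (L 1) (L (-1))) * ((m:ℂ)^3 - m) / 6 := by
  have nonneg : ∀ k : ℤ, 0 ≤ k → d (L k) (L (-k)) =
      d (L 1) (L (-1)) * k
        + (d (L 2) (L (-2)) - 2 * d (L 1) (L (-1))) * ((k:ℂ)^3 - k) / 6 := by
    have pos : ∀ k : ℤ, 2 ≤ k → d (L k) (L (-k)) =
        d (L 1) (L (-1)) * k
          + (d (L 2) (L (-2)) - 2 * d (L 1) (L (-1))) * ((k:ℂ)^3 - k) / 6 := by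
      refine Int.le_induction ?_ ?_
      · push_cast; ring
      · intro n hn ih
        have R := Rrec d hd hj n 1
        have hne : (1:ℂ) - (n:ℂ) ≠ 0 := by
          have : (n:ℂ) ≠ 1 := by exact_mod_cast (by omega : n ≠ 1)
          intro hE; apply this; linear_combination -hE
        have key : ((1:ℂ) - n) * (d (L (n+1)) (L (-(n+1)))
            - (d (L 1) (L (-1)) * ((n:ℂ)+1)
              + (d (L 2) (L (-2)) - 2 * d (L 1) (L (-1))) * (((n:ℂ)+1)^3 - ((n:ℂ)+1)) / 6)) = 0 := by
          linear_combination R - ((n:ℂ)+2)*ih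
        rcases mul_eq_zero.mp key with hc | hc
        · exact absurd hc hne
        · push_cast
          linear_combination hc
    intro k hk
    by_cases h2 : 2 ≤ k
    · exact pos k h2
    · have : k = 0 ∨ k = 1 := by omega
      rcases this with rfl | rfl
      · rw [show (-0 : ℤ) = 0 by ring]
        have := hd (L 0) (L 0)
        push_cast
        linear_combination this/2
      · push_cast; ring
  rcases le_or_gt 0 m with hm | hm
  · exact nonneg m hm
  · have h := nonneg (-m) (by omega)
    rw [neg_neg] at h
    have sk := hd (L m) (L (-m))
    push_cast at h ⊢
    linear_combination sk - h

include hd hj in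
lemma Srec (m n : ℤ) :
    ((n:ℂ)-m) * d (L (m+n)) (N (-(m+n))) + ((m:ℂ)+n) * d (L m) (N (-m))
      - ((m:ℂ)+n) * d (L n) (N (-n)) = 0 := by
  have H := hj (L m) (L n) (N (-(m+n)))
  simp only [brC, brI] at H
  rw [show n + -(m+n) = -m by ring, show m + -(m+n) = -n by ring] at H
  have s1 := hd (N (-m)) (L m)
  have s2 := hd (N (-n)) (L n)
  push_cast at H ⊢
  linear_combination H + ((m:ℂ)+n)*s1 - ((m:ℂ)+n)*s2

include hd hj in
lemma hLN (m : ℤ) : d (L m) (N (-m)) =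
    d (L 1) (N (-1)) * m
      + (d (L 2) (N (-2)) - 2 * d (L 1) (N (-1))) * ((m:ℂ)^2 - m) / 2 := by
  have nu0 : d (L 0) (N 0) = 0 := by
    have H := hj (L 1) (L (-1)) (N 0)
    simp only [brC, brI] at H
    rw [show (1:ℤ) + -1 = 0 by ring] at H
    push_cast at H
    linear_combination -H/2
  have nonneg : ∀ k : ℤ, 0 ≤ k → d (L k) (N (-k)) =
      d (L 1) (N (-1)) * k
        + (d (L 2) (N (-2)) - 2 * d (L 1) (N (-1))) * ((k:ℂ)^2 - k) / 2 := by
    have pos : ∀ k : ℤ, 2 ≤ k → d (L k) (N (-k)) =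
        d (L 1) (N (-1)) * k
          + (d (L 2) (N (-2)) - 2 * d (L 1) (N (-1))) * ((k:ℂ)^2 - k) / 2 := by
      refine Int.le_induction ?_ ?_
      · push_cast; ring
      · intro n hn ih
        have S := Srec d hd hj n 1
        have hne : (1:ℂ) - (n:ℂ) ≠ 0 := by
          have : (n:ℂ) ≠ 1 := by exact_mod_cast (by omega : n ≠ 1)
          intro hE; apply this; linear_combination -hE
        have key : ((1:ℂ) - n) * (d (L (n+1)) (N (-(n+1)))
            - (d (L 1) (N (-1)) * ((n:ℂ)+1)
              + (d (L 2) (N (-2)) - 2 * d (L 1) (N (-1))) * (((n:ℂ)+1)^2 - ((n:ℂ)+1)) / 2)) = 0 := by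
          linear_combination S - ((n:ℂ)+1)*ih
        rcases mul_eq_zero.mp key with hc | hc
        · exact absurd hc hne
        · push_cast
          linear_combination hc
    intro k hk
    by_cases h2 : 2 ≤ k
    · exact pos k h2
    · have : k = 0 ∨ k = 1 := by omega
      rcases this with rfl | rfl
      · rw [show (-0 : ℤ) = 0 by ring]
        push_cast
        linear_combination nu0
      · push_cast; ring
  rcases le_or_gt 0 m with hm | hm
  · exact nonneg m hm
  · have S := Srec d hd hj m (1-m)
    rw [show m + (1-m) = 1 by ring] at S
    have h := nonneg (1-m) (by omega)
    push_cast at S h ⊢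
    linear_combination S + h

end abstractD3

open SVIdx in
/-- The linear functional (on basis indices) used to correct a cocycle. -/
noncomputable def FF (tL tM tN : ℂ) (e : SVIdx → ℂ) : SVIdx → ℂ
  | L k => if k = 0 then tL else e (L k) / (k:ℂ)
  | M k => if k = 0 then tM else e (M k) / (k:ℂ)
  | N k => if k = 0 then tN else e (N k) / (k:ℂ)
  | Y k => e (Y k) * 2 / (2*(k:ℂ)+1)

open SVIdx in
lemma brC_LY (m n : ℤ) : brC (L m) (Y n) = (n : ℂ) + (1 - (m : ℂ)) / 2 := rfl
open SVIdx in
lemma brC_YL (n m : ℤ) : brC (Y n) (L m) = -((n : ℂ) + (1 - (m : ℂ)) / 2) := rfl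
open SVIdx in
lemma FF_Y (tL tM tN : ℂ) (e : SVIdx → ℂ) (k : ℤ) :
    FF tL tM tN e (Y k) = e (Y k) * 2 / (2*(k:ℂ)+1) := rfl

section master
open SVIdx
variable (d : SVIdx → SVIdx → ℂ)
    (hd : ∀ i j, d i j = - d j i)
    (hj : ∀ i j k, brC i j * d (brI i j) k + brC j k * d (brI j k) i
      + brC k i * d (brI k i) j = 0)

include hd hj in
lemma master (i j : SVIdx) : d i j =
    (2*(d (L 2) (L (-2)) - 2*d (L 1) (L (-1)))) * c1 i j
    + ((d (L 2) (N (-2)) - 2*d (L 1) (N (-1)))/2) * c2 i j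
    + (- d (N 1) (N (-1))) * c3 i j
    + brC i j * FF (-(d (L 1) (L (-1)))/2) (d (N 0) (M 0)/2) (-(d (L 1) (N (-1))))
        (d (L 0)) (brI i j) := by
  have K := keyL0 d hd hj i j
  cases i with
  | L m =>
    cases j with
    | L n =>
      by_cases hmn : m + n = 0
      · obtain rfl : n = -m := by omega
        have hf := hLL d hd hj m
        simp only [c1, c2, c3, brC, brI, FF, show m + -m = 0 from by ring, if_pos rfl]
        push_cast at hf ⊢
        linear_combination hf
      · have hne : (m:ℂ) + n ≠ 0 := by exact_mod_cast (Int.cast_ne_zero (α := ℂ)).mpr hmn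
        simp only [c1, c2, c3, brC, brI, FF, if_neg hmn, dg2] at K ⊢
        push_cast at K ⊢
        field_simp
        linear_combination K
    | M n =>
      by_cases hmn : m + n = 0
      · obtain rfl : n = -m := by omega
        have hf := hLM d hd hj m
        simp only [c1, c2, c3, brC, brI, FF, show m + -m = 0 from by ring, if_pos rfl]
        push_cast at hf ⊢
        linear_combination hf
      · have hne : (m:ℂ) + n ≠ 0 := by exact_mod_cast (Int.cast_ne_zero (α := ℂ)).mpr hmn
        simp only [c1, c2, c3, brC, brI, FF, if_neg hmn, dg2] at K ⊢
        push_cast at K ⊢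
        field_simp
        linear_combination K
    | N n =>
      by_cases hmn : m + n = 0
      · obtain rfl : n = -m := by omega
        have hf := hLN d hd hj m
        simp only [c1, c2, c3, brC, brI, FF, show m + -m = 0 from by ring, if_pos rfl]
        push_cast at hf ⊢
        linear_combination hf
      · have hne : (m:ℂ) + n ≠ 0 := by exact_mod_cast (Int.cast_ne_zero (α := ℂ)).mpr hmn
        simp only [c1, c2, c3, brC, brI, FF, if_neg hmn, dg2] at K ⊢
        push_cast at K ⊢
        field_simp
        linear_combination K
    | Y n =>
      have hne : 2*((m:ℂ) + n) + 1 ≠ 0 := by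
        intro hE
        refine (Int.cast_ne_zero (α := ℂ)).mpr (by omega : 2*(m+n)+1 ≠ 0) ?_
        push_cast
        linear_combination hE
      simp only [c1, c2, c3, brI, dg2] at K ⊢
      rw [brC_LY] at K ⊢
      rw [FF_Y]
      push_cast at K ⊢
      field_simp
      linear_combination 2*K
  | M m =>
    cases j with
    | L n =>
      by_cases hmn : m + n = 0
      · obtain rfl : m = -n := by omega
        have hf := hLM d hd hj n
        have sk := hd (L n) (M (-n))
        simp only [c1, c2, c3, brC, brI, FF, show n + -n = 0 from by ring, if_pos rfl]
        push_cast at hf sk ⊢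
        linear_combination sk - hf
      · have hne : (n:ℂ) + m ≠ 0 := by
          exact_mod_cast (Int.cast_ne_zero (α := ℂ)).mpr (by omega : n + m ≠ 0)
        simp only [c1, c2, c3, brC, brI, FF, if_neg (by omega : ¬ (n + m = 0)), dg2] at K ⊢
        push_cast at K ⊢
        field_simp
        linear_combination K
    | M n =>
      by_cases hmn : m + n = 0
      · obtain rfl : n = -m := by omega
        have hf := hMM d hd hj m
        simp only [c1, c2, c3, brC, brI, FF]
        push_cast at hf ⊢
        linear_combination hf
      · have hne : ((2*(m+n) : ℤ):ℂ) ≠ 0 := (Int.cast_ne_zero (α := ℂ)).mpr (by omega)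
        simp only [brC, brI, dg2] at K
        rw [show 2*m + 2*n = 2*(m+n) from by ring] at K
        rcases mul_eq_zero.mp (by linear_combination K : ((2*(m+n):ℤ):ℂ) * d (M m) (M n) = 0) with hc | hc
        · exact absurd hc hne
        · simp only [c1, c2, c3, brC, brI, FF, hc]
          ring
    | N n =>
      by_cases hmn : m + n = 0
      · obtain rfl : m = -n := by omega
        have hf := hNM d hd hj n
        have sk := hd (N n) (M (-n))
        simp only [c1, c2, c3, brC, brI, FF, show n + -n = 0 from by ring, if_pos rfl]
        push_cast at hf sk ⊢
        linear_combination sk - hf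
      · have hne : (n:ℂ) + m ≠ 0 := by
          exact_mod_cast (Int.cast_ne_zero (α := ℂ)).mpr (by omega : n + m ≠ 0)
        simp only [c1, c2, c3, brC, brI, FF, if_neg (by omega : ¬ (n + m = 0)), dg2] at K ⊢
        push_cast at K ⊢
        field_simp
        linear_combination K
    | Y n =>
      have hne : ((2*(m+n)+1 : ℤ) : ℂ) ≠ 0 := (Int.cast_ne_zero (α := ℂ)).mpr (by omega)
      simp only [brC, brI, dg2] at K
      rw [show 2*m + (2*n+1) = 2*(m+n)+1 from by ring] at K
      rcases mul_eq_zero.mp (by linear_combination K :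
          ((2*(m+n)+1:ℤ):ℂ) * d (M m) (Y n) = 0) with hc | hc
      · exact absurd hc hne
      · simp only [c1, c2, c3, brC, brI, FF, hc]
        ring
  | N m =>
    cases j with
    | L n =>
      by_cases hmn : m + n = 0
      · obtain rfl : m = -n := by omega
        have hf := hLN d hd hj n
        have sk := hd (L n) (N (-n))
        simp only [c1, c2, c3, brC, brI, FF, show n + -n = 0 from by ring, if_pos rfl]
        push_cast at hf sk ⊢
        linear_combination sk - hf
      · have hne : (n:ℂ) + m ≠ 0 := by
          exact_mod_cast (Int.cast_ne_zero (α := ℂ)).mpr (by omega : n + m ≠ 0)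
        simp only [c1, c2, c3, brC, brI, FF, if_neg (by omega : ¬ (n + m = 0)), dg2] at K ⊢
        push_cast at K ⊢
        field_simp
        linear_combination K
    | M n =>
      by_cases hmn : m + n = 0
      · obtain rfl : n = -m := by omega
        have hf := hNM d hd hj m
        simp only [c1, c2, c3, brC, brI, FF, show m + -m = 0 from by ring, if_pos rfl]
        push_cast at hf ⊢
        linear_combination hf
      · have hne : (m:ℂ) + n ≠ 0 := by exact_mod_cast (Int.cast_ne_zero (α := ℂ)).mpr hmn
        simp only [c1, c2, c3, brC, brI, FF, if_neg (by omega : ¬ (m + n = 0)), dg2] at K ⊢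
        push_cast at K ⊢
        field_simp
        linear_combination K
    | N n =>
      by_cases hmn : m + n = 0
      · obtain rfl : n = -m := by omega
        have hf := hNN d hd hj m
        simp only [c1, c2, c3, brC, brI, FF, show m + -m = 0 from by ring, if_pos rfl]
        push_cast at hf ⊢
        linear_combination hf
      · have hne : ((2*(m+n) : ℤ):ℂ) ≠ 0 := (Int.cast_ne_zero (α := ℂ)).mpr (by omega)
        simp only [brC, brI, dg2] at K
        rw [show 2*m + 2*n = 2*(m+n) from by ring] at K
        rcases mul_eq_zero.mp (by linear_combination K : ((2*(m+n):ℤ):ℂ) * d (N m) (N n) = 0) with hc | hc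
        · exact absurd hc hne
        · simp only [c1, c2, c3, brC, brI, FF, hc, if_neg hmn]
          ring
    | Y n =>
      have hne : 2*((m:ℂ) + n) + 1 ≠ 0 := by
        intro hE
        refine (Int.cast_ne_zero (α := ℂ)).mpr (by omega : 2*(m+n)+1 ≠ 0) ?_
        push_cast
        linear_combination hE
      simp only [c1, c2, c3, brC, brI, FF, dg2] at K ⊢
      push_cast at K ⊢
      field_simp
      linear_combination 2*K
  | Y m =>
    cases j with
    | L n =>
      have hne : 2*((n:ℂ) + m) + 1 ≠ 0 := by
        intro hE
        refine (Int.cast_ne_zero (α := ℂ)).mpr (by omega : 2*(n+m)+1 ≠ 0) ?_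
        push_cast
        linear_combination hE
      simp only [c1, c2, c3, brI, dg2] at K ⊢
      rw [brC_YL] at K ⊢
      rw [FF_Y]
      push_cast at K ⊢
      field_simp
      linear_combination 2*K
    | M n =>
      have hne : ((2*(m+n)+1 : ℤ) : ℂ) ≠ 0 := (Int.cast_ne_zero (α := ℂ)).mpr (by omega)
      simp only [brC, brI, dg2] at K
      rw [show 2*m + 1 + 2*n = 2*(m+n)+1 from by ring] at K
      rcases mul_eq_zero.mp (by linear_combination K :
          ((2*(m+n)+1:ℤ):ℂ) * d (Y m) (M n) = 0) with hc | hc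
      · exact absurd hc hne
      · simp only [c1, c2, c3, brC, brI, FF, hc]
        ring
    | N n =>
      have hne : 2*((n:ℂ) + m) + 1 ≠ 0 := by
        intro hE
        refine (Int.cast_ne_zero (α := ℂ)).mpr (by omega : 2*(n+m)+1 ≠ 0) ?_
        push_cast
        linear_combination hE
      simp only [c1, c2, c3, brC, brI, FF, dg2] at K ⊢
      push_cast at K ⊢
      field_simp
      linear_combination 2*K
    | Y n =>
      by_cases hmn : m + n + 1 = 0
      · obtain rfl : n = -1-m := by omega
        have hf := hYY d hd hj m
        simp only [c1, c2, c3, brC, brI, FF, show m + (-1-m) + 1 = 0 from by ring, if_pos rfl]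
        push_cast at hf ⊢
        linear_combination hf
      · have hne : (m:ℂ) + n + 1 ≠ 0 := by
          exact_mod_cast (Int.cast_ne_zero (α := ℂ)).mpr (by omega : m + n + 1 ≠ 0)
        simp only [c1, c2, c3, brC, brI, FF, if_neg hmn, dg2] at K ⊢
        push_cast at K ⊢
        field_simp
        linear_combination K

end master

lemma c1_mem (h : ExtSV g) : h.mkForm c1 ∈ twoCocycles g := by
  apply mem_twoCocycles_of_basis h
  · intro i j
    rw [h.mkForm_apply, h.mkForm_apply]
    rcases i with m|m|m|m <;> rcases j with n|n|n|n <;> simp [c1] <;>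
      split_ifs <;>
        first
          | ring1
          | (exfalso; omega)
          | (obtain rfl : n = -m := by omega
             push_cast; ring)
  · intro i j k
    simp only [h.mkForm_apply]
    rcases i with m|m|m|m <;> rcases j with n|n|n|n <;> rcases k with k|k|k|k <;>
      simp [brC, brI, c1] <;>
      split_ifs <;>
        first
          | ring1
          | (exfalso; omega)
          | (obtain rfl : k = -m-n := by omega
             push_cast; ring)

lemma c2_mem (h : ExtSV g) : h.mkForm c2 ∈ twoCocycles g := by
  apply mem_twoCocycles_of_basis h
  · intro i j
    rw [h.mkForm_apply, h.mkForm_apply]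
    rcases i with m|m|m|m <;> rcases j with n|n|n|n <;> simp [c2] <;>
      split_ifs <;>
        first
          | ring1
          | (exfalso; omega)
          | (obtain rfl : n = -m := by omega
             push_cast; ring)
  · intro i j k
    simp only [h.mkForm_apply]
    rcases i with m|m|m|m <;> rcases j with n|n|n|n <;> rcases k with k|k|k|k <;>
      simp [brC, brI, c2] <;>
      split_ifs <;>
        first
          | ring1
          | (exfalso; omega)
          | (obtain rfl : k = -m-n := by omega
             push_cast; ring)

lemma c3_mem (h : ExtSV g) : h.mkForm c3 ∈ twoCocycles g := by
  apply mem_twoCocycles_of_basis h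
  · intro i j
    rw [h.mkForm_apply, h.mkForm_apply]
    rcases i with m|m|m|m <;> rcases j with n|n|n|n <;> simp [c3] <;>
      split_ifs <;>
        first
          | ring1
          | (exfalso; omega)
          | (obtain rfl : n = -m := by omega
             push_cast; ring)
  · intro i j k
    simp only [h.mkForm_apply]
    rcases i with m|m|m|m <;> rcases j with n|n|n|n <;> rcases k with k|k|k|k <;>
      simp [brC, brI, c3] <;>
      split_ifs <;>
        first
          | ring1
          | (exfalso; omega)
          | (obtain rfl : k = -m-n := by omega
             push_cast; ring)

lemma cob_le_coc : twoCoboundaries g ≤ twoCocycles g := by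
  rintro φ ⟨f, hf⟩
  constructor
  · intro x y
    rw [hf x y, hf y x, ← lie_skew x y, map_neg]
  · intro x y z
    rw [hf, hf, hf, ← map_add, ← map_add]
    have j : ⁅⁅x, y⁆, z⁆ + ⁅⁅y, z⁆, x⁆ + ⁅⁅z, x⁆, y⁆ = 0 := by
      have := lie_jacobi z x y
      have e1 : ⁅⁅x, y⁆, z⁆ = -⁅z, ⁅x, y⁆⁆ := (neg_eq_iff_eq_neg.mpr (lie_skew _ _).symm).symm
      have e2 : ⁅⁅y, z⁆, x⁆ = -⁅x, ⁅y, z⁆⁆ := (neg_eq_iff_eq_neg.mpr (lie_skew _ _).symm).symm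
      have e3 : ⁅⁅z, x⁆, y⁆ = -⁅y, ⁅z, x⁆⁆ := (neg_eq_iff_eq_neg.mpr (lie_skew _ _).symm).symm
      rw [e1, e2, e3]
      have := lie_jacobi x y z
      linear_combination (norm := abel) - this
    rw [j, map_zero]

lemma indep (h : ExtSV g) (a b c : ℂ)
    (hm : a • h.mkForm c1 + b • h.mkForm c2 + c • h.mkForm c3 ∈ twoCoboundaries g) :
    a = 0 ∧ b = 0 ∧ c = 0 := by
  obtain ⟨f, hf⟩ := hm
  have E : ∀ i j, a * c1 i j + b * c2 i j + c * c3 i j = brC i j * f (h.b (brI i j)) := by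
    intro i j
    have := hf (h.b i) (h.b j)
    rw [h.brkt i j, map_smul, smul_eq_mul] at this
    simpa [h.mkForm_apply] using this
  have e1 := E (SVIdx.L 1) (SVIdx.L (-1))
  have e2 := E (SVIdx.L 2) (SVIdx.L (-2))
  have e3 := E (SVIdx.L 1) (SVIdx.N (-1))
  have e4 := E (SVIdx.L 2) (SVIdx.N (-2))
  have e5 := E (SVIdx.N 1) (SVIdx.N (-1))
  simp [c1, c2, c3, brC, brI] at e1 e2 e3 e4 e5
  norm_num [show ((1:ℤ)+(-1) : ℤ) = 0 from rfl] at e1 e2 e3 e4 e5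
  refine ⟨?_, ?_, ?_⟩
  · linear_combination 2 * e2 - 8 * e1
  · linear_combination e4 / 2 - e3
  · linear_combination e5

lemma span_eq (h : ExtSV g) :
    Submodule.span ℂ {h.mkForm c1, h.mkForm c2, h.mkForm c3} ⊔ twoCoboundaries g =
      twoCocycles g := by
  apply le_antisymm
  · apply sup_le
    · rw [Submodule.span_le]
      rintro x hx
      simp only [Set.mem_insert_iff, Set.mem_singleton_iff] at hx
      rcases hx with rfl | rfl | rfl
      exacts [c1_mem h, c2_mem h, c3_mem h]
    · exact cob_le_coc
  · intro φ hφ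
    set d : SVIdx → SVIdx → ℂ := fun i j => φ (h.b i) (h.b j) with hdd
    have hd : ∀ i j, d i j = - d j i := fun i j => hφ.1 _ _
    have hj : ∀ i j k, brC i j * d (brI i j) k + brC j k * d (brI j k) i
        + brC k i * d (brI k i) j = 0 := by
      intro i j k
      have H := hφ.2 (h.b i) (h.b j) (h.b k)
      rw [h.brkt i j, h.brkt j k, h.brkt k i] at H
      simpa [map_smul, smul_eq_mul] using H
    set Flin : g →ₗ[ℂ] ℂ := h.b.constr ℂ (FF (-(d (SVIdx.L 1) (SVIdx.L (-1)))/2)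
      (d (SVIdx.N 0) (SVIdx.M 0)/2) (-(d (SVIdx.L 1) (SVIdx.N (-1)))) (d (SVIdx.L 0))) with hF
    set ψ : g →ₗ[ℂ] g →ₗ[ℂ] ℂ := (brkt2 (g := g)).compr₂ Flin with hψdef
    have hψ : ψ ∈ twoCoboundaries g := ⟨Flin, fun x y => by
      simp [hψdef, LinearMap.compr₂_apply]⟩
    have heq : φ = (2*(d (SVIdx.L 2) (SVIdx.L (-2)) - 2*d (SVIdx.L 1) (SVIdx.L (-1)))) • h.mkForm c1
        + ((d (SVIdx.L 2) (SVIdx.N (-2)) - 2*d (SVIdx.L 1) (SVIdx.N (-1)))/2) • h.mkForm c2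
        + (- d (SVIdx.N 1) (SVIdx.N (-1))) • h.mkForm c3 + ψ := by
      apply h.b.ext; intro i
      apply h.b.ext; intro j
      have hm := master d hd hj i j
      have hψij : ψ (h.b i) (h.b j) = brC i j * FF (-(d (SVIdx.L 1) (SVIdx.L (-1)))/2)
          (d (SVIdx.N 0) (SVIdx.M 0)/2) (-(d (SVIdx.L 1) (SVIdx.N (-1)))) (d (SVIdx.L 0))
          (brI i j) := by
        simp only [hψdef, LinearMap.compr₂_apply, brkt2_apply, h.brkt i j, map_smul,
          smul_eq_mul, hF, Module.Basis.constr_basis]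
      simp only [LinearMap.add_apply, LinearMap.smul_apply, smul_eq_mul, h.mkForm_apply, hψij]
      exact hm
    rw [heq]
    refine Submodule.add_mem _ (Submodule.mem_sup_left ?_) (Submodule.mem_sup_right hψ)
    refine Submodule.add_mem _ (Submodule.add_mem _ ?_ ?_) ?_
    · exact Submodule.smul_mem _ _ (Submodule.subset_span (by simp))
    · exact Submodule.smul_mem _ _ (Submodule.subset_span (by simp))
    · exact Submodule.smul_mem _ _ (Submodule.subset_span (by simp))

/-- `H²(sv~, ℂ)` is 3-dimensional, spanned by the classes of `φ₁, φ₂, φ₃`: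
the cocycles `φ₁, φ₂, φ₃` together with the coboundaries span all 2-cocycles,
and their classes modulo coboundaries are linearly independent.  (This says
exactly that `H² = Z²/B²` has dimension 3 with basis the classes of the `φᵢ`.) -/
theorem extSV_H2_dim_three {g : Type*} [LieRing g] [LieAlgebra ℂ g] (h : ExtSV g) :
    twoCoboundaries g ≤ twoCocycles g ∧
    h.mkForm (c1) ∈ twoCocycles g ∧ h.mkForm (c2) ∈ twoCocycles g ∧
      h.mkForm (c3) ∈ twoCocycles g ∧
    Submodule.span ℂ {h.mkForm c1, h.mkForm c2, h.mkForm c3} ⊔ twoCoboundaries g =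
      twoCocycles g ∧
    (∀ a b c : ℂ, a • h.mkForm c1 + b • h.mkForm c2 + c • h.mkForm c3 ∈ twoCoboundaries g →
      a = 0 ∧ b = 0 ∧ c = 0) :=
  ⟨cob_le_coc, c1_mem h, c2_mem h, c3_mem h, span_eq h, fun a b c hm => indep h a b c hm⟩
end

section
/- Each of the maps φ₁(L_m,L_n)=δ_{m+n,0}(m³−m)/12, φ₂(L_m,N_n)=δ_{m+n,0}(m²−m), φ₃(N_m,N_n)=δ_{m+n,0}n (extended by skew-symmetry and by zero on all other pairs of basis vectors) is a 2-cocycle on the extended Schrödinger-Virasoro algebra sv~. -/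
variable (g : Type*) [LieRing g] [LieAlgebra ℂ g]

variable {g}

/-- Bracket as a bilinear map. -/
noncomputable def brMap : g →ₗ[ℂ] g →ₗ[ℂ] g :=
  LinearMap.mk₂ ℂ (fun x y => ⁅x, y⁆) add_lie smul_lie lie_add lie_smul

/-- The Jacobi/cocycle trilinear map associated to a bilinear form. -/
noncomputable def jacMap (φ : g →ₗ[ℂ] g →ₗ[ℂ] ℂ) : g →ₗ[ℂ] g →ₗ[ℂ] g →ₗ[ℂ] ℂ :=
  LinearMap.mk₂ ℂ
    (fun x y => φ (brMap x y) + (φ.flip x).comp (brMap y)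
      + (φ.flip y).comp (brMap.flip x))
    (by intro x x' y; ext z; simp [brMap]; try ring)
    (by intro c x y; ext z; simp [brMap]; try ring)
    (by intro x y y'; ext z; simp [brMap]; try ring)
    (by intro c x y; ext z; simp [brMap]; try ring)

lemma jacMap_apply (φ : g →ₗ[ℂ] g →ₗ[ℂ] ℂ) (x y z : g) :
    jacMap φ x y z = φ ⁅x, y⁆ z + φ ⁅y, z⁆ x + φ ⁅z, x⁆ y := by
  simp [jacMap, brMap]

/-- Structure constants of the bracket: `⁅b i, b j⁆ = (br i j).1 • b (br i j).2`. -/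
noncomputable def br : SVIdx → SVIdx → ℂ × SVIdx
  | .L m, .L n => ((n : ℂ) - m, .L (m + n))
  | .L m, .M n => ((n : ℂ), .M (m + n))
  | .M n, .L m => (-(n : ℂ), .M (m + n))
  | .L m, .N n => ((n : ℂ), .N (m + n))
  | .N n, .L m => (-(n : ℂ), .N (m + n))
  | .L m, .Y n => ((n : ℂ) + (1 - m) / 2, .Y (m + n))
  | .Y n, .L m => (-((n : ℂ) + (1 - m) / 2), .Y (m + n))
  | .M _, .M _ => (0, .L 0)
  | .N _, .N _ => (0, .L 0)
  | .Y m, .Y n => ((m : ℂ) - n, .M (m + n + 1))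
  | .N m, .M n => (2, .M (m + n))
  | .M n, .N m => (-2, .M (m + n))
  | .N m, .Y n => (1, .Y (m + n))
  | .Y n, .N m => (-1, .Y (m + n))
  | .M _, .Y _ => (0, .L 0)
  | .Y _, .M _ => (0, .L 0)

lemma ExtSV.lie_b (h : ExtSV g) (i j : SVIdx) :
    ⁅h.b i, h.b j⁆ = (br i j).1 • h.b (br i j).2 := by
  rcases i with m|m|m|m <;> rcases j with n|n|n|n <;>
    simp only [br, h.LL, h.LM, h.LN, h.LY, h.MM, h.NN, h.YY, h.NM, h.NY, h.MY,
      one_smul, zero_smul, smul_zero] <;>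
    first
      | rfl
      | (rw [← lie_skew]
         simp only [h.LM, h.LN, h.LY, h.NM, h.NY, h.MY, h.MM, h.NN]
         first | module | simp)

lemma cocycle_of_basis (h : ExtSV g) (c : SVIdx → SVIdx → ℂ)
    (hskew : ∀ i j, c i j = - c j i)
    (hjac : ∀ i j k, (br i j).1 * c (br i j).2 k + (br j k).1 * c (br j k).2 i
      + (br k i).1 * c (br k i).2 j = 0) :
    h.mkForm c ∈ twoCocycles g := by
  constructor
  · have key : h.mkForm c = - (h.mkForm c).flip := by
      apply h.b.ext; intro i
      apply h.b.ext; intro j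
      simp [h.mkForm_apply, hskew i j]
    intro x y
    conv_lhs => rw [key]
    simp
  · have key : jacMap (h.mkForm c) = 0 := by
      apply h.b.ext; intro i
      apply h.b.ext; intro j
      apply h.b.ext; intro k
      rw [jacMap_apply]
      simp only [h.lie_b, map_smul, LinearMap.smul_apply, h.mkForm_apply, smul_eq_mul,
        LinearMap.zero_apply]
      exact hjac i j k
    intro x y z
    have h0 : jacMap (h.mkForm c) x y z = 0 := by rw [key]; rfl
    rw [jacMap_apply] at h0
    exact h0

/-- Each of `φ₁, φ₂, φ₃` (extended by skew-symmetry and by zero on all other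
pairs of basis vectors) is a 2-cocycle on `sv~`. -/
theorem extSV_phi_are_cocycles {g : Type*} [LieRing g] [LieAlgebra ℂ g] (h : ExtSV g) :
    h.mkForm c1 ∈ twoCocycles g ∧ h.mkForm c2 ∈ twoCocycles g ∧
      h.mkForm c3 ∈ twoCocycles g := by
  have skew1 : ∀ i j, c1 i j = - c1 j i := by
    rintro (m|m|m|m) (n|n|n|n) <;> simp [c1] <;> split_ifs <;>
      first
        | rfl
        | ring1
        | (exfalso; omega)
        | ((have hn : n = -m := by omega); subst hn; push_cast; ring1)
  have skew2 : ∀ i j, c2 i j = - c2 j i := by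
    rintro (m|m|m|m) (n|n|n|n) <;> simp [c2] <;> split_ifs <;>
      first
        | rfl
        | (exfalso; omega)
        | ring1
  have skew3 : ∀ i j, c3 i j = - c3 j i := by
    rintro (m|m|m|m) (n|n|n|n) <;> simp [c3] <;> split_ifs <;>
      first
        | rfl
        | ring1
        | (exfalso; omega)
        | ((have hn : n = -m := by omega); subst hn; push_cast; ring1)
  have jac : ∀ c, c = c1 ∨ c = c2 ∨ c = c3 →
      ∀ i j k, (br i j).1 * c (br i j).2 k + (br j k).1 * c (br j k).2 i
        + (br k i).1 * c (br k i).2 j = 0 := by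
    rintro c (rfl|rfl|rfl) (m|m|m|m) (n|n|n|n) (k|k|k|k) <;>
      simp [br, c1, c2, c3] <;> split_ifs <;>
      first
        | rfl
        | ring1
        | (exfalso; omega)
        | ((have hk : k = -m - n := by omega); subst hk; push_cast; ring1)
  exact ⟨cocycle_of_basis h c1 skew1 (jac c1 (Or.inl rfl)),
    cocycle_of_basis h c2 skew2 (jac c2 (Or.inr (Or.inl rfl))),
    cocycle_of_basis h c3 skew3 (jac c3 (Or.inr (Or.inr rfl)))⟩
end

section
/- The vector space with basis {L_n, M_n, N_n, Y_{n+1/2}, C_L, C_LN, C_N | n ∈ ℤ} with products [L_m,L_n]=(n−m)L_{m+n}+δ_{m+n,0}(m³−m)/12·C_L, [N_m,N_n]=nδ_{m+n,0}C_N, [L_m,N_n]=nN_{m+n}+δ_{m+n,0}(m²−m)C_LN, [Y_{m+1/2},Y_{n+1/2}]=(m−n)M_{m+n+1}, [L_m,M_n]=nM_{m+n}, [L_m,Y_{n+1/2}]=(n+(1−m)/2)Y_{m+n+1/2}, [N_m,M_n]=2M_{m+n}, [N_m,Y_{n+1/2}]=Y_{m+n+1/2}, all other brackets among basis elements zero and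 C_L, C_LN, C_N central, is a Lie algebra. -/
/-- Index type for the basis of the universal central extension `sv^` of the
extended Schrödinger-Virasoro Lie algebra.  `Y n` stands for `Y_{n+1/2}`. -/
inductive SVHatIdx : Type
  | L : ℤ → SVHatIdx
  | M : ℤ → SVHatIdx
  | N : ℤ → SVHatIdx
  | Y : ℤ → SVHatIdx
  | CL : SVHatIdx
  | CLN : SVHatIdx
  | CN : SVHatIdx

/-- A complex Lie algebra `g` realizes the structure constants of `sv^`:
it has a basis indexed by `SVHatIdx` with the prescribed brackets, the
elements `C_L, C_LN, C_N` being central and all remaining brackets among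
basis vectors zero. -/
structure ExtSVHat (g : Type*) [LieRing g] [LieAlgebra ℂ g] where
  b : Module.Basis SVHatIdx ℂ g
  LL : ∀ m n : ℤ, ⁅b (SVHatIdx.L m), b (SVHatIdx.L n)⁆ =
      ((n : ℂ) - (m : ℂ)) • b (SVHatIdx.L (m + n)) +
        (if m + n = 0 then ((m : ℂ) ^ 3 - m) / 12 else 0) • b SVHatIdx.CL
  NN : ∀ m n : ℤ, ⁅b (SVHatIdx.N m), b (SVHatIdx.N n)⁆ =
      (if m + n = 0 then (n : ℂ) else 0) • b SVHatIdx.CN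
  LN : ∀ m n : ℤ, ⁅b (SVHatIdx.L m), b (SVHatIdx.N n)⁆ =
      (n : ℂ) • b (SVHatIdx.N (m + n)) +
        (if m + n = 0 then (m : ℂ) ^ 2 - m else 0) • b SVHatIdx.CLN
  YY : ∀ m n : ℤ, ⁅b (SVHatIdx.Y m), b (SVHatIdx.Y n)⁆ =
      ((m : ℂ) - (n : ℂ)) • b (SVHatIdx.M (m + n + 1))
  LM : ∀ m n : ℤ, ⁅b (SVHatIdx.L m), b (SVHatIdx.M n)⁆ = (n : ℂ) • b (SVHatIdx.M (m + n))
  LY : ∀ m n : ℤ, ⁅b (SVHatIdx.L m), b (SVHatIdx.Y n)⁆ =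
      ((n : ℂ) + (1 - (m : ℂ)) / 2) • b (SVHatIdx.Y (m + n))
  NM : ∀ m n : ℤ, ⁅b (SVHatIdx.N m), b (SVHatIdx.M n)⁆ = (2 : ℂ) • b (SVHatIdx.M (m + n))
  NY : ∀ m n : ℤ, ⁅b (SVHatIdx.N m), b (SVHatIdx.Y n)⁆ = b (SVHatIdx.Y (m + n))
  MM : ∀ m n : ℤ, ⁅b (SVHatIdx.M m), b (SVHatIdx.M n)⁆ = 0
  MY : ∀ m n : ℤ, ⁅b (SVHatIdx.M m), b (SVHatIdx.Y n)⁆ = 0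
  MN : ∀ m n : ℤ, ⁅b (SVHatIdx.M m), b (SVHatIdx.N n)⁆ = -((2 : ℂ) • b (SVHatIdx.M (n + m)))
  centralCL : ∀ x : g, ⁅x, b SVHatIdx.CL⁆ = 0
  centralCLN : ∀ x : g, ⁅x, b SVHatIdx.CLN⁆ = 0
  centralCN : ∀ x : g, ⁅x, b SVHatIdx.CN⁆ = 0

namespace SVHat
open SVHatIdx Finsupp

abbrev G := SVHatIdx →₀ ℂ

noncomputable def e (i : SVHatIdx) : G := Finsupp.single i 1

noncomputable def cc : SVHatIdx → SVHatIdx → G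
  | L m, L n => ((n:ℂ) - m) • e (L (m+n)) + (if m+n = 0 then ((m:ℂ)^3 - m)/12 else 0) • e CL
  | L m, M n => (n:ℂ) • e (M (m+n))
  | L m, N n => (n:ℂ) • e (N (m+n)) + (if m+n=0 then (m:ℂ)^2 - m else 0) • e CLN
  | L m, Y n => ((n:ℂ) + (1 - (m:ℂ))/2) • e (Y (m+n))
  | M m, L n => -((m:ℂ) • e (M (n+m)))
  | M _, M _ => 0
  | M m, N n => -((2:ℂ) • e (M (n+m)))
  | M _, Y _ => 0
  | N m, L n => -((m:ℂ) • e (N (n+m)) + (if n+m=0 then (n:ℂ)^2 - n else 0) • e CLN)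
  | N m, M n => (2:ℂ) • e (M (m+n))
  | N m, N n => (if m+n=0 then (n:ℂ) else 0) • e CN
  | N m, Y n => e (Y (m+n))
  | Y m, L n => -(((m:ℂ) + (1 - (n:ℂ))/2) • e (Y (n+m)))
  | Y _, M _ => 0
  | Y m, N n => -(e (Y (n+m)))
  | Y m, Y n => ((m:ℂ) - n) • e (M (m+n+1))
  | _, _ => 0

noncomputable def B : G →ₗ[ℂ] G →ₗ[ℂ] G :=
  Finsupp.lsum ℂ fun i => LinearMap.toSpanSingleton ℂ _
    (Finsupp.lsum ℂ fun j => LinearMap.toSpanSingleton ℂ G (cc i j))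

lemma B_e (i j : SVHatIdx) : B (e i) (e j) = cc i j := by
  simp [B, e, LinearMap.toSpanSingleton]

lemma cc_skew (i j : SVHatIdx) : cc i j = - cc j i := by
  cases i <;> cases j <;>
    simp only [cc, neg_add_rev, neg_neg, neg_zero, add_comm] <;>
    try module
  all_goals rename_i m n
  all_goals split_ifs with h
  all_goals try module
  all_goals (obtain rfl : n = -m := (by omega); push_cast; module)


set_option maxHeartbeats 4000000 in
lemma leib_e (i j k : SVHatIdx) :
    B (e i) (B (e j) (e k)) = B (B (e i) (e j)) (e k) + B (e j) (B (e i) (e k)) := by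
  rcases i with m|m|m|m|_|_|_ <;> rcases j with n|n|n|n|_|_|_ <;> rcases k with p|p|p|p|_|_|_ <;>
    simp only [B_e, cc, map_add, map_smul, map_neg, map_zero, LinearMap.add_apply,
      LinearMap.smul_apply, LinearMap.neg_apply, LinearMap.zero_apply,
      smul_zero, add_zero, zero_add, neg_zero, smul_neg, neg_neg, smul_smul, smul_add,
      mul_ite, ite_mul, mul_zero, zero_mul, mul_one, one_mul,
      add_assoc, add_comm, add_left_comm]
  all_goals try push_cast [add_assoc, add_comm, add_left_comm]
  all_goals try module
  all_goals split_ifs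
  all_goals try module
  all_goals (
    (try (rcases eq_or_ne p (-m-n) with rfl|hp)) <;>
    (try (rcases eq_or_ne p (-n) with rfl|hpn)) <;>
    (try (rcases eq_or_ne p (-m) with rfl|hpm)) <;>
    (try (rcases eq_or_ne n (-m) with rfl|hnm)) <;>
    (try (rcases eq_or_ne m 0 with rfl|hm0)) <;>
    (try (rcases eq_or_ne n 0 with rfl|hn0)) <;>
    (try push_cast) <;>
    (first
      | module
      | (exfalso; omega)))
lemma single_eq (i : SVHatIdx) (a : ℂ) : Finsupp.single i a = a • e i := by
  simp [e, Finsupp.smul_single]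

lemma B_skew (x y : G) : B x y = - B y x := by
  induction x using Finsupp.induction_linear with
  | zero => simp
  | add a b ha hb => simp only [map_add, LinearMap.add_apply, ha, hb]; abel
  | single i c =>
    induction y using Finsupp.induction_linear with
    | zero => simp
    | add a b ha hb => simp only [map_add, LinearMap.add_apply, ha, hb]; abel
    | single j d =>
      rw [single_eq, single_eq]
      simp only [map_smul, LinearMap.smul_apply, B_e, cc_skew i j]
      simp [smul_comm c d]

lemma leib (x y z : G) : B x (B y z) = B (B x y) z + B y (B x z) := by
  induction x using Finsupp.induction_linear with
  | zero => simp
  | add a b ha hb => simp only [map_add, LinearMap.add_apply, ha, hb]; abel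
  | single i c =>
    induction y using Finsupp.induction_linear with
    | zero => simp
    | add a b ha hb => simp only [map_add, LinearMap.add_apply, map_zero, ha, hb]; abel
    | single j d =>
      induction z using Finsupp.induction_linear with
      | zero => simp
      | add a b ha hb => simp only [map_add, LinearMap.add_apply, ha, hb]; abel
      | single k f =>
        rw [single_eq i, single_eq j, single_eq k]
        simp only [map_smul, LinearMap.smul_apply]
        rw [leib_e i j k]
        module

noncomputable instance : LieRing G where
  bracket x y := B x y
  add_lie x y z := by simp [map_add]
  lie_add x y z := by simp
  lie_self x := by
    have h := B_skew x x
    have h2 : (2:ℂ) • B x x = 0 := by rw [two_smul]; nth_rewrite 2 [h]; simp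
    simpa using smul_eq_zero.mp h2
  leibniz_lie x y z := leib x y z

noncomputable instance : LieAlgebra ℂ G where
  lie_smul c x y := by change B x (c • y) = c • B x y; simp

lemma bracket_def (x y : G) : ⁅x, y⁆ = B x y := rfl

lemma bso (i : SVHatIdx) : (Finsupp.basisSingleOne : Module.Basis SVHatIdx ℂ G) i = e i := rfl

lemma B_left_zero (i : SVHatIdx) (h : ∀ j, cc i j = 0) : B (e i) = 0 := by
  apply Finsupp.lhom_ext
  intro j a
  rw [single_eq, map_smul, B_e, h j, smul_zero, LinearMap.zero_apply]

lemma central (i : SVHatIdx) (h : ∀ j, cc i j = 0) (x : G) : ⁅x, e i⁆ = 0 := by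
  rw [bracket_def, B_skew, B_left_zero i h, LinearMap.zero_apply, neg_zero]

end SVHat

open SVHat in
/-- The structure constants of `sv^` do define a Lie algebra: there exists a
complex Lie algebra with a basis realizing them. -/
theorem extSVHat_isLieAlgebra :
    ∃ (g : Type) (i : LieRing g) (j : @LieAlgebra ℂ g _ i), Nonempty (@ExtSVHat g i j) := by
  refine ⟨G, inferInstance, inferInstance, ⟨⟨Finsupp.basisSingleOne, ?_, ?_, ?_, ?_, ?_, ?_, ?_,
    ?_, ?_, ?_, ?_, ?_, ?_, ?_⟩⟩⟩
  · intro m n; rw [bso, bso, bso, bso, bracket_def, B_e]; rfl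
  · intro m n; rw [bso, bso, bso, bracket_def, B_e]; rfl
  · intro m n; rw [bso, bso, bso, bso, bracket_def, B_e]; rfl
  · intro m n; rw [bso, bso, bso, bracket_def, B_e]; rfl
  · intro m n; rw [bso, bso, bso, bracket_def, B_e]; rfl
  · intro m n; rw [bso, bso, bso, bracket_def, B_e]; rfl
  · intro m n; rw [bso, bso, bso, bracket_def, B_e]; rfl
  · intro m n; rw [bso, bso, bso, bracket_def, B_e]; rfl
  · intro m n; rw [bso, bso, bracket_def, B_e]; rfl
  · intro m n; rw [bso, bso, bracket_def, B_e]; rfl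
  · intro m n; rw [bso, bso, bso, bracket_def, B_e]; rfl
  · intro x; rw [bso]; exact central _ (by intro j; cases j <;> simp [cc]) x
  · intro x; rw [bso]; exact central _ (by intro j; cases j <;> simp [cc]) x
  · intro x; rw [bso]; exact central _ (by intro j; cases j <;> simp [cc]) x
end

section
/- Every invariant bilinear form on the extended Schrödinger-Virasoro algebra sv~ is zero. That is, if f: sv~ × sv~ → ℂ is bilinear and satisfies f([x,y],z) = f(x,[y,z]) for all x,y,z ∈ sv~, then f = 0. -/
/-- Every invariant bilinear form on `sv~` (symmetry not assumed) is zero. -/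
theorem extSV_no_invariant_form {g : Type*} [LieRing g] [LieAlgebra ℂ g] (h : ExtSV g)
    (f : g →ₗ[ℂ] g →ₗ[ℂ] ℂ)
    (hinv : ∀ x y z : g, f ⁅x, y⁆ z = f x ⁅y, z⁆) :
    f = 0 := by
  obtain ⟨b, hLL, hMM, hNN, hYY, hLM, hLN, hLY, hNM, hNY, hMY⟩ := h
  -- eigenvector lemma: if x, y are ad-u eigenvectors with eigenvalue sum ≠ 0 then f x y = 0
  have eig : ∀ (u x y : g) (a c : ℂ), ⁅u, x⁆ = a • x → ⁅u, y⁆ = c • y →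
      a + c ≠ 0 → f x y = 0 := by
    intro u x y a c hx hy hac
    have h1 := hinv x u y
    rw [← lie_skew, hx, hy] at h1
    simp only [map_neg, map_smul, LinearMap.neg_apply, LinearMap.smul_apply,
      smul_eq_mul] at h1
    have h2 : (a + c) * f x y = 0 := by linear_combination -h1
    exact (mul_eq_zero.mp h2).resolve_left hac
  have qL : ∀ n : ℤ, ⁅b (SVIdx.N 0), b (SVIdx.L n)⁆ = (0:ℂ) • b (SVIdx.L n) := by
    intro n; rw [← lie_skew, hLN]; simp
  have qN : ∀ n : ℤ, ⁅b (SVIdx.N 0), b (SVIdx.N n)⁆ = (0:ℂ) • b (SVIdx.N n) := by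
    intro n; rw [hNN]; simp
  have qM : ∀ n : ℤ, ⁅b (SVIdx.N 0), b (SVIdx.M n)⁆ = (2:ℂ) • b (SVIdx.M n) := by
    intro n; simpa using hNM 0 n
  have qY : ∀ n : ℤ, ⁅b (SVIdx.N 0), b (SVIdx.Y n)⁆ = (1:ℂ) • b (SVIdx.Y n) := by
    intro n; simpa using hNY 0 n
  have wL : ∀ n : ℤ, ⁅b (SVIdx.L 0), b (SVIdx.L n)⁆ = (n:ℂ) • b (SVIdx.L n) := by
    intro n; simpa using hLL 0 n
  have wN : ∀ n : ℤ, ⁅b (SVIdx.L 0), b (SVIdx.N n)⁆ = (n:ℂ) • b (SVIdx.N n) := by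
    intro n; simpa using hLN 0 n
  -- f vanishes on (N, N)
  have FNN : ∀ a n : ℤ, f (b (SVIdx.N a)) (b (SVIdx.N n)) = 0 := by
    intro a n
    have h1 := hinv (b (SVIdx.L (a-1))) (b (SVIdx.N 1)) (b (SVIdx.N n))
    rw [hLN, hNN] at h1
    have e1 : a - 1 + 1 = a := by ring
    rw [e1] at h1
    simpa using h1
  -- relation on (L, L) pairs
  have relLL : ∀ m p : ℤ, ((m:ℂ) - (p:ℂ) - (p:ℂ)) * f (b (SVIdx.L m)) (b (SVIdx.L (-m)))
      = ((p:ℂ) - (m:ℂ) - (m:ℂ)) * f (b (SVIdx.L p)) (b (SVIdx.L (-p))) := by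
    intro m p
    have h1 := hinv (b (SVIdx.L p)) (b (SVIdx.L (m - p))) (b (SVIdx.L (-m)))
    rw [hLL, hLL] at h1
    have e1 : p + (m - p) = m := by ring
    have e2 : m - p + -m = -p := by ring
    rw [e1, e2] at h1
    simp only [map_smul, LinearMap.smul_apply, smul_eq_mul] at h1
    push_cast at h1 ⊢
    linear_combination h1
  have FLL : ∀ m : ℤ, f (b (SVIdx.L m)) (b (SVIdx.L (-m))) = 0 := by
    have hd1 : f (b (SVIdx.L 1)) (b (SVIdx.L (-1))) = 0 := by
      have h12 := relLL 1 2
      push_cast at h12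
      linear_combination (-1/3 : ℂ) * h12
    have hd0 : f (b (SVIdx.L 0)) (b (SVIdx.L (-0))) = 0 := by
      have h01 := relLL 0 1
      push_cast at h01
      linear_combination (-1/2 : ℂ) * h01 - (1/2 : ℂ) * hd1
    intro m
    by_cases hm : m = 0
    · subst hm; exact hd0
    · have hmc : (m:ℂ) ≠ 0 := Int.cast_ne_zero.mpr hm
      have hm0 := relLL m 0
      push_cast at hm0
      have h3 : (m:ℂ) * f (b (SVIdx.L m)) (b (SVIdx.L (-m))) = 0 := by
        linear_combination hm0 + (-2 * (m:ℂ)) * hd0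
      exact (mul_eq_zero.mp h3).resolve_left hmc
  -- relation on (L, N) pairs
  have relLN : ∀ m p : ℤ, ((m:ℂ) - (p:ℂ) - (p:ℂ)) * f (b (SVIdx.L m)) (b (SVIdx.N (-m)))
      = -(m:ℂ) * f (b (SVIdx.L p)) (b (SVIdx.N (-p))) := by
    intro m p
    have h1 := hinv (b (SVIdx.L p)) (b (SVIdx.L (m - p))) (b (SVIdx.N (-m)))
    rw [hLL, hLN] at h1
    have e1 : p + (m - p) = m := by ring
    have e2 : m - p + -m = -p := by ring
    rw [e1, e2] at h1
    simp only [map_smul, LinearMap.smul_apply, smul_eq_mul] at h1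
    push_cast at h1 ⊢
    linear_combination h1
  -- relating f (N _) (L _) to f (L _) (N _)
  have eNc : ∀ m : ℤ, f (b (SVIdx.N (m+2))) (b (SVIdx.L (-(m+2))))
      = - f (b (SVIdx.L m)) (b (SVIdx.N (-m))) := by
    intro m
    have h1 := hinv (b (SVIdx.L m)) (b (SVIdx.N 2)) (b (SVIdx.L (-(m+2))))
    rw [hLN, ← lie_skew, hLN] at h1
    have e1 : -(m+2) + 2 = -m := by ring
    rw [e1] at h1
    simp only [map_smul, map_neg, LinearMap.smul_apply, LinearMap.neg_apply,
      smul_eq_mul] at h1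
    push_cast at h1
    linear_combination (1/2 : ℂ) * h1
  have eNc1 : ∀ m : ℤ, f (b (SVIdx.N (m+2))) (b (SVIdx.L (-(m+2))))
      = - f (b (SVIdx.L (m+1))) (b (SVIdx.N (-(m+1)))) := by
    intro m
    have h1 := hinv (b (SVIdx.L (m+1))) (b (SVIdx.N 1)) (b (SVIdx.L (-(m+2))))
    rw [hLN, ← lie_skew, hLN] at h1
    have e1 : m + 1 + 1 = m + 2 := by ring
    have e2 : -(m+2) + 1 = -(m+1) := by ring
    rw [e1, e2] at h1
    simp only [map_smul, map_neg, LinearMap.smul_apply, LinearMap.neg_apply,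
      smul_eq_mul] at h1
    push_cast at h1
    linear_combination h1
  have FLN : ∀ m : ℤ, f (b (SVIdx.L m)) (b (SVIdx.N (-m))) = 0 := by
    intro m
    have h1 := relLN m (m+1)
    have h2 : f (b (SVIdx.L (m+1))) (b (SVIdx.N (-(m+1))))
        = f (b (SVIdx.L m)) (b (SVIdx.N (-m))) := by
      linear_combination eNc1 m - eNc m
    push_cast at h1
    linear_combination (-1/2 : ℂ) * h1 + ((m:ℂ)/2) * h2
  have FNL : ∀ m : ℤ, f (b (SVIdx.N m)) (b (SVIdx.L (-m))) = 0 := by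
    intro m
    have h1 := eNc (m - 2)
    have e1 : m - 2 + 2 = m := by ring
    rw [e1] at h1
    rw [h1, FLN]
    simp
  have key : ∀ i j : SVIdx, f (b i) (b j) = 0 := by
    intro i j
    cases i with
    | L m =>
      cases j with
      | L n =>
        by_cases hmn : m + n = 0
        · have hn : n = -m := by omega
          subst hn; exact FLL m
        · exact eig (b (SVIdx.L 0)) _ _ _ _ (wL m) (wL n)
            (by exact_mod_cast hmn)
      | M n => exact eig (b (SVIdx.N 0)) _ _ _ _ (qL m) (qM n) (by norm_num)
      | N n =>
        by_cases hmn : m + n = 0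
        · have hn : n = -m := by omega
          subst hn; exact FLN m
        · exact eig (b (SVIdx.L 0)) _ _ _ _ (wL m) (wN n)
            (by exact_mod_cast hmn)
      | Y n => exact eig (b (SVIdx.N 0)) _ _ _ _ (qL m) (qY n) (by norm_num)
    | M m =>
      cases j with
      | L n => exact eig (b (SVIdx.N 0)) _ _ _ _ (qM m) (qL n) (by norm_num)
      | M n => exact eig (b (SVIdx.N 0)) _ _ _ _ (qM m) (qM n) (by norm_num)
      | N n => exact eig (b (SVIdx.N 0)) _ _ _ _ (qM m) (qN n) (by norm_num)
      | Y n => exact eig (b (SVIdx.N 0)) _ _ _ _ (qM m) (qY n) (by norm_num)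
    | N m =>
      cases j with
      | L n =>
        by_cases hmn : m + n = 0
        · have hn : n = -m := by omega
          subst hn; exact FNL m
        · exact eig (b (SVIdx.L 0)) _ _ _ _ (wN m) (wL n)
            (by exact_mod_cast hmn)
      | M n => exact eig (b (SVIdx.N 0)) _ _ _ _ (qN m) (qM n) (by norm_num)
      | N n => exact FNN m n
      | Y n => exact eig (b (SVIdx.N 0)) _ _ _ _ (qN m) (qY n) (by norm_num)
    | Y m =>
      cases j with
      | L n => exact eig (b (SVIdx.N 0)) _ _ _ _ (qY m) (qL n) (by norm_num)
      | M n => exact eig (b (SVIdx.N 0)) _ _ _ _ (qY m) (qM n) (by norm_num)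
      | N n => exact eig (b (SVIdx.N 0)) _ _ _ _ (qY m) (qN n) (by norm_num)
      | Y n => exact eig (b (SVIdx.N 0)) _ _ _ _ (qY m) (qY n) (by norm_num)
  apply b.ext
  intro i
  have : f (b i) = (0 : g →ₗ[ℂ] ℂ) := by
    apply b.ext
    intro j
    simpa using key i j
  simp [this]
end

section
/- For each ε ∈ {±1}, λ ∈ ℤ, a, d ∈ ℂ*, the linear map σ on sv~ determined by σ(L_n) = aⁿεL_{εn} + aⁿλN_{εn}, σ(N_n) = aⁿN_{εn}, σ(M_n) = εd²a^{n−1}M_{ε(n−2λ)}, σ(Y_{n+1/2}) = d aⁿ Y_{ε(n+1/2−λ)} is a Lie algebra automorphism of sv~. -/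
/-- `σ` acts on the basis of `sv~` by the formulas
`σ(L_n) = aⁿ ε L_{εn} + aⁿ λ N_{εn}`, `σ(N_n) = aⁿ N_{εn}`,
`σ(M_n) = ε d² a^{n-1} M_{ε(n-2λ)}`, `σ(Y_{n+1/2}) = d aⁿ Y_{ε(n+1/2-λ)}`. -/
def ExtSV.IsSigma {g : Type*} [LieRing g] [LieAlgebra ℂ g] (h : ExtSV g)
    (ε lam : ℤ) (a d : ℂ) (σ : g → g) : Prop :=
  (∀ n : ℤ, σ (h.b (SVIdx.L n)) =
      (a ^ n * (ε : ℂ)) • h.b (SVIdx.L (ε * n)) +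
        (a ^ n * (lam : ℂ)) • h.b (SVIdx.N (ε * n))) ∧
  (∀ n : ℤ, σ (h.b (SVIdx.N n)) = a ^ n • h.b (SVIdx.N (ε * n))) ∧
  (∀ n : ℤ, σ (h.b (SVIdx.M n)) =
      ((ε : ℂ) * d ^ 2 * a ^ (n - 1)) • h.b (SVIdx.M (ε * (n - 2 * lam)))) ∧
  (∀ n : ℤ, σ (h.b (SVIdx.Y n)) =
      (d * a ^ n) • h.b (SVIdx.Y (ε * n + (ε - 1) / 2 - ε * lam)))


section Aux

variable {g : Type*} [LieRing g] [LieAlgebra ℂ g]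

/-- The linear map given by the `σ` formulas with parameters `ε, lam, a, d`. -/
noncomputable def sigmaFun (h : ExtSV g) (ε lam : ℤ) (a d : ℂ) : g →ₗ[ℂ] g :=
  h.b.constr ℂ fun i => match i with
    | .L n => (a ^ n * (ε : ℂ)) • h.b (.L (ε * n)) + (a ^ n * (lam : ℂ)) • h.b (.N (ε * n))
    | .N n => a ^ n • h.b (.N (ε * n))
    | .M n => ((ε : ℂ) * d ^ 2 * a ^ (n - 1)) • h.b (.M (ε * (n - 2 * lam)))
    | .Y n => (d * a ^ n) • h.b (.Y (ε * n + (ε - 1) / 2 - ε * lam))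

variable (h : ExtSV g) (ε lam : ℤ) (a d : ℂ)

lemma sigmaFun_L (n : ℤ) : sigmaFun h ε lam a d (h.b (SVIdx.L n)) =
    (a ^ n * (ε : ℂ)) • h.b (.L (ε * n)) + (a ^ n * (lam : ℂ)) • h.b (.N (ε * n)) := by
  simp [sigmaFun]

lemma sigmaFun_N (n : ℤ) : sigmaFun h ε lam a d (h.b (SVIdx.N n)) =
    a ^ n • h.b (.N (ε * n)) := by
  simp [sigmaFun]

lemma sigmaFun_M (n : ℤ) : sigmaFun h ε lam a d (h.b (SVIdx.M n)) =
    ((ε : ℂ) * d ^ 2 * a ^ (n - 1)) • h.b (.M (ε * (n - 2 * lam))) := by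
  simp [sigmaFun]

lemma sigmaFun_Y (n : ℤ) : sigmaFun h ε lam a d (h.b (SVIdx.Y n)) =
    (d * a ^ n) • h.b (.Y (ε * n + (ε - 1) / 2 - ε * lam)) := by
  simp [sigmaFun]

set_option maxHeartbeats 1000000 in
lemma sigma_key_pos (ha : a ≠ 0) : ∀ i j, sigmaFun h 1 lam a d ⁅h.b i, h.b j⁆
    = ⁅sigmaFun h 1 lam a d (h.b i), sigmaFun h 1 lam a d (h.b j)⁆ := by
  have ML : ∀ m n : ℤ, ⁅h.b (SVIdx.M m), h.b (SVIdx.L n)⁆ = -((m:ℂ) • h.b (SVIdx.M (n+m))) :=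
    fun m n => by rw [← lie_skew, h.LM]
  have NL : ∀ m n : ℤ, ⁅h.b (SVIdx.N m), h.b (SVIdx.L n)⁆ = -((m:ℂ) • h.b (SVIdx.N (n+m))) :=
    fun m n => by rw [← lie_skew, h.LN]
  have YL : ∀ m n : ℤ, ⁅h.b (SVIdx.Y m), h.b (SVIdx.L n)⁆
      = -(((m:ℂ) + (1 - (n:ℂ))/2) • h.b (SVIdx.Y (n+m))) := fun m n => by rw [← lie_skew, h.LY]
  have MN : ∀ m n : ℤ, ⁅h.b (SVIdx.M m), h.b (SVIdx.N n)⁆ = -((2:ℂ) • h.b (SVIdx.M (n+m))) :=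
    fun m n => by rw [← lie_skew, h.NM]
  have YN : ∀ m n : ℤ, ⁅h.b (SVIdx.Y m), h.b (SVIdx.N n)⁆ = -(h.b (SVIdx.Y (n+m))) :=
    fun m n => by rw [← lie_skew, h.NY]
  have YM : ∀ m n : ℤ, ⁅h.b (SVIdx.Y m), h.b (SVIdx.M n)⁆ = 0 :=
    fun m n => by rw [← lie_skew, h.MY, neg_zero]
  rintro (m|m|m|m) (n|n|n|n) <;>
    simp only [h.LL, h.MM, h.NN, h.YY, h.LM, h.LN, h.LY, h.NM, h.NY, h.MY, ML, NL, YL, MN, YN, YM,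
      map_smul, map_add, map_neg, map_zero, sigmaFun_L, sigmaFun_M, sigmaFun_N, sigmaFun_Y,
      lie_add, add_lie, lie_smul, smul_lie, lie_neg, neg_lie, smul_zero, zero_smul, smul_neg,
      lie_zero, zero_lie, smul_add, smul_smul, neg_zero, add_zero, zero_add, one_mul] <;>
    push_cast <;>
    ring_nf <;>
    simp only [zpow_add₀ ha, zpow_sub₀ ha, zpow_neg, zpow_one, zpow_zero] <;>
    match_scalars <;>
    ring

set_option maxHeartbeats 1000000 in
lemma sigma_key_neg (ha : a ≠ 0) : ∀ i j, sigmaFun h (-1) lam a d ⁅h.b i, h.b j⁆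
    = ⁅sigmaFun h (-1) lam a d (h.b i), sigmaFun h (-1) lam a d (h.b j)⁆ := by
  have ML : ∀ m n : ℤ, ⁅h.b (SVIdx.M m), h.b (SVIdx.L n)⁆ = -((m:ℂ) • h.b (SVIdx.M (n+m))) :=
    fun m n => by rw [← lie_skew, h.LM]
  have NL : ∀ m n : ℤ, ⁅h.b (SVIdx.N m), h.b (SVIdx.L n)⁆ = -((m:ℂ) • h.b (SVIdx.N (n+m))) :=
    fun m n => by rw [← lie_skew, h.LN]
  have YL : ∀ m n : ℤ, ⁅h.b (SVIdx.Y m), h.b (SVIdx.L n)⁆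
      = -(((m:ℂ) + (1 - (n:ℂ))/2) • h.b (SVIdx.Y (n+m))) := fun m n => by rw [← lie_skew, h.LY]
  have MN : ∀ m n : ℤ, ⁅h.b (SVIdx.M m), h.b (SVIdx.N n)⁆ = -((2:ℂ) • h.b (SVIdx.M (n+m))) :=
    fun m n => by rw [← lie_skew, h.NM]
  have YN : ∀ m n : ℤ, ⁅h.b (SVIdx.Y m), h.b (SVIdx.N n)⁆ = -(h.b (SVIdx.Y (n+m))) :=
    fun m n => by rw [← lie_skew, h.NY]
  have YM : ∀ m n : ℤ, ⁅h.b (SVIdx.Y m), h.b (SVIdx.M n)⁆ = 0 :=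
    fun m n => by rw [← lie_skew, h.MY, neg_zero]
  rintro (m|m|m|m) (n|n|n|n) <;>
    simp only [h.LL, h.MM, h.NN, h.YY, h.LM, h.LN, h.LY, h.NM, h.NY, h.MY, ML, NL, YL, MN, YN, YM,
      map_smul, map_add, map_neg, map_zero, sigmaFun_L, sigmaFun_M, sigmaFun_N, sigmaFun_Y,
      lie_add, add_lie, lie_smul, smul_lie, lie_neg, neg_lie, smul_zero, zero_smul, smul_neg,
      lie_zero, zero_lie, smul_add, smul_smul, neg_zero, add_zero, zero_add, one_mul, neg_mul,
      neg_neg, mul_neg] <;>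
    push_cast <;>
    ring_nf <;>
    simp only [zpow_add₀ ha, zpow_sub₀ ha, zpow_neg, zpow_one, zpow_zero] <;>
    match_scalars <;>
    ring

set_option maxHeartbeats 1000000 in
lemma sigma_comp_pos (ha : a ≠ 0) (hd : d ≠ 0) :
    (sigmaFun h 1 (-lam) a⁻¹ (d⁻¹ * a ^ (-lam))).comp (sigmaFun h 1 lam a d) = LinearMap.id ∧
    (sigmaFun h 1 lam a d).comp (sigmaFun h 1 (-lam) a⁻¹ (d⁻¹ * a ^ (-lam))) = LinearMap.id := by
  constructor <;>
  · apply h.b.ext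
    rintro (n|n|n|n) <;>
    · simp only [LinearMap.comp_apply, LinearMap.id_apply, map_add, map_smul,
        sigmaFun_L, sigmaFun_M, sigmaFun_N, sigmaFun_Y, smul_smul, smul_add, one_mul,
        Int.cast_one, Int.cast_neg, mul_one, neg_neg, inv_zpow, zpow_neg]
      try ring_nf
      try simp only [zpow_add₀ ha, zpow_sub₀ ha, zpow_neg, zpow_one, zpow_zero]
      match_scalars
      all_goals field_simp [zpow_mul]
      all_goals try rw [zpow_mul]
      all_goals try simp only [zpow_ofNat]
      all_goals ring

set_option maxHeartbeats 1000000 in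
lemma sigma_comp_neg (ha : a ≠ 0) (hd : d ≠ 0) :
    (sigmaFun h (-1) lam a (d⁻¹ * a ^ (1-lam))).comp (sigmaFun h (-1) lam a d) = LinearMap.id ∧
    (sigmaFun h (-1) lam a d).comp (sigmaFun h (-1) lam a (d⁻¹ * a ^ (1-lam))) = LinearMap.id := by
  constructor <;>
  · apply h.b.ext
    rintro (n|n|n|n) <;>
    · simp only [LinearMap.comp_apply, LinearMap.id_apply, map_add, map_smul,
        sigmaFun_L, sigmaFun_M, sigmaFun_N, sigmaFun_Y, smul_smul, smul_add, one_mul,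
        Int.cast_one, Int.cast_neg, mul_one, neg_neg, inv_zpow, zpow_neg, neg_mul]
      try ring_nf
      try simp only [zpow_add₀ ha, zpow_sub₀ ha, zpow_neg, zpow_one, zpow_zero]
      match_scalars
      all_goals field_simp [zpow_mul]
      all_goals try rw [zpow_mul]
      all_goals try simp only [zpow_ofNat]
      all_goals ring

/-- Extend a bracket identity from basis vectors to all vectors. -/
lemma sigma_bilin (f : g →ₗ[ℂ] g)
    (key : ∀ i j, f ⁅h.b i, h.b j⁆ = ⁅f (h.b i), f (h.b j)⁆) :
    ∀ x y : g, f ⁅x, y⁆ = ⁅f x, f y⁆ := by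
  let P1 : g →ₗ[ℂ] g →ₗ[ℂ] g := LinearMap.mk₂ ℂ (fun x y : g => f ⁅x, y⁆)
    (fun x₁ x₂ y => by simp only [add_lie, map_add]) (fun c x y => by simp only [smul_lie, map_smul])
    (fun x y₁ y₂ => by simp only [lie_add, map_add]) (fun c x y => by simp only [lie_smul, map_smul])
  let P2 : g →ₗ[ℂ] g →ₗ[ℂ] g := LinearMap.mk₂ ℂ (fun x y : g => ⁅f x, f y⁆)
    (fun x₁ x₂ y => by simp only [map_add, add_lie]) (fun c x y => by simp only [map_smul, smul_lie])
    (fun x y₁ y₂ => by simp only [map_add, lie_add]) (fun c x y => by simp only [map_smul, lie_smul])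
  have hP : P1 = P2 := by
    apply h.b.ext; intro i; apply h.b.ext; intro j
    exact key i j
  intro x y
  exact DFunLike.congr_fun (DFunLike.congr_fun hP x) y

/-- Package a linear map with a two-sided linear inverse and bracket preservation
on the basis into a Lie algebra automorphism. -/
lemma sigma_build (f t : g →ₗ[ℂ] g)
    (c1 : t.comp f = LinearMap.id) (c2 : f.comp t = LinearMap.id)
    (key : ∀ i j, f ⁅h.b i, h.b j⁆ = ⁅f (h.b i), f (h.b j)⁆) :
    ∃ σ : g ≃ₗ⁅ℂ⁆ g, ∀ x, σ x = f x := by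
  have hk := sigma_bilin h f key
  refine ⟨{ toLinearMap := f, map_lie' := fun {x y} => hk x y, invFun := t,
            left_inv := fun x => ?_, right_inv := fun x => ?_ }, fun x => rfl⟩
  · have := DFunLike.congr_fun c1 x
    simpa using this
  · have := DFunLike.congr_fun c2 x
    simpa using this

end Aux

/-- For `ε ∈ {±1}`, `λ ∈ ℤ`, `a, d ∈ ℂ*`, the linear map determined by the
formulas of `ExtSV.IsSigma` is a Lie algebra automorphism of `sv~`. -/
theorem extSV_sigma_is_automorphism {g : Type*} [LieRing g] [LieAlgebra ℂ g] (h : ExtSV g)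
    (ε lam : ℤ) (hε : ε = 1 ∨ ε = -1) (a d : ℂ) (ha : a ≠ 0) (hd : d ≠ 0) :
    ∃ σ : g ≃ₗ⁅ℂ⁆ g, h.IsSigma ε lam a d σ := by
  rcases hε with rfl | rfl
  · obtain ⟨c1, c2⟩ := sigma_comp_pos h lam a d ha hd
    obtain ⟨σ, hσ⟩ := sigma_build h (sigmaFun h 1 lam a d) _ c1 c2 (sigma_key_pos h lam a d ha)
    exact ⟨σ, fun n => by rw [hσ, sigmaFun_L], fun n => by rw [hσ, sigmaFun_N],
      fun n => by rw [hσ, sigmaFun_M], fun n => by rw [hσ, sigmaFun_Y]⟩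
  · obtain ⟨c1, c2⟩ := sigma_comp_neg h lam a d ha hd
    obtain ⟨σ, hσ⟩ := sigma_build h (sigmaFun h (-1) lam a d) _ c1 c2 (sigma_key_neg h lam a d ha)
    exact ⟨σ, fun n => by rw [hσ, sigmaFun_L], fun n => by rw [hσ, sigmaFun_N],
      fun n => by rw [hσ, sigmaFun_M], fun n => by rw [hσ, sigmaFun_Y]⟩
end

section
/- The automorphisms σ(ε,λ,a,d) of sv~ compose according to the rule σ(ε₁,λ₁,a₁,d₁)∘σ(ε₂,λ₂,a₂,d₂) = σ(ε₁ε₂, ε₂λ₁+λ₂, a₁^{ε₂}a₂, d₁d₂a₁^{(ε₂−1)/2−ε₂λ₂}). -/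
/-- Composition rule for the automorphisms `σ(ε, λ, a, d)` of `sv~`:
`σ(ε₁,λ₁,a₁,d₁) ∘ σ(ε₂,λ₂,a₂,d₂) = σ(ε₁ε₂, ε₂λ₁+λ₂, a₁^{ε₂}a₂, d₁d₂a₁^{(ε₂−1)/2−ε₂λ₂})`. -/
theorem extSV_sigma_comp {g : Type*} [LieRing g] [LieAlgebra ℂ g] (h : ExtSV g)
    (ε₁ ε₂ lam₁ lam₂ : ℤ) (hε₁ : ε₁ = 1 ∨ ε₁ = -1) (hε₂ : ε₂ = 1 ∨ ε₂ = -1)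
    (a₁ a₂ d₁ d₂ : ℂ) (ha₁ : a₁ ≠ 0) (ha₂ : a₂ ≠ 0) (hd₁ : d₁ ≠ 0) (hd₂ : d₂ ≠ 0)
    (σ₁ σ₂ σ₃ : g →ₗ[ℂ] g)
    (h₁ : h.IsSigma ε₁ lam₁ a₁ d₁ σ₁) (h₂ : h.IsSigma ε₂ lam₂ a₂ d₂ σ₂)
    (h₃ : h.IsSigma (ε₁ * ε₂) (ε₂ * lam₁ + lam₂) (a₁ ^ ε₂ * a₂)
      (d₁ * d₂ * a₁ ^ ((ε₂ - 1) / 2 - ε₂ * lam₂)) σ₃) :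
    ∀ x : g, σ₁ (σ₂ x) = σ₃ x := by
  obtain ⟨L1, N1, M1, Y1⟩ := h₁
  obtain ⟨L2, N2, M2, Y2⟩ := h₂
  obtain ⟨L3, N3, M3, Y3⟩ := h₃
  suffices hcomp : σ₁ ∘ₗ σ₂ = σ₃ by
    intro x; exact LinearMap.congr_fun hcomp x
  have key : ∀ (x : ℂ) (m n : ℤ), x * a₁ ^ m * a₁ ^ n = x * a₁ ^ (m + n) := by
    intro x m n; rw [mul_assoc, ← zpow_add₀ ha₁]
  apply h.b.ext
  intro i
  rcases hε₁ with rfl | rfl <;> rcases hε₂ with rfl | rfl <;> cases i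
  all_goals
    simp only [LinearMap.comp_apply, L2, N2, M2, Y2, map_add, map_smul, L1, N1, M1, Y1,
      L3, N3, M3, Y3, smul_add, smul_smul]
    norm_num
    try simp only [inv_zpow, ← zpow_neg, mul_zpow, ← zpow_mul]
    try ring_nf
    try simp only [← zpow_add₀ ha₁, ← zpow_sub₀ ha₁, ← zpow_add₀ ha₂, ← zpow_sub₀ ha₂]
    try ring_nf
    try module
    try congr 1
    try simp only [← zpow_natCast, ← zpow_mul, ← zpow_add₀ ha₁]
    try push_cast
    try simp only [key]
    try ring_nf
end
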